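/- arXiv:0911.2201 — 3 statements merged into one kernel-verified Lean document; each statement's English description precedes it below -/
import Mathlib

section
/- Let μ be a Borel probability measure on ℝ such that Λ·μ((−Λ,Λ)ᶜ) → 0 as Λ → +∞. Then ∫_{(−π/s, π/s)} λ dμ(λ) − (1/s)·∫_ℝ sin(λs) dμ(λ) → 0 as s → 0⁺. -/
open MeasureTheory Filter Topology Real

lemma aux_abs_sub_sin {x : ℝ} (hx : |x| ≤ π) : |x - Real.sin x| ≤ x ^ 2 := by
  have key : ∀ y : ℝ, 0 ≤ y → y ≤ π → |y - Real.sin y| ≤ y ^ 2 := by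
    intro y hy0 hyπ
    have hs : Real.sin y ≤ y := Real.sin_le hy0
    rw [abs_of_nonneg (by linarith)]
    rcases le_or_gt y 1 with h1 | h1
    · rcases eq_or_lt_of_le hy0 with h0 | h0
      · simp [← h0]
      · have := Real.sin_gt_sub_cube h0
        nlinarith
    · have hsn : 0 ≤ Real.sin y := Real.sin_nonneg_of_nonneg_of_le_pi hy0 hyπ
      nlinarith
  rcases le_or_gt 0 x with h | h
  · exact key x h (le_trans (le_abs_self x) hx)
  · have h2 := key (-x) (by linarith) (by rw [abs_of_neg h] at hx; linarith)
    rw [Real.sin_neg, show (-x) - -Real.sin x = -(x - Real.sin x) by ring, abs_neg] at h2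
    calc |x - Real.sin x| ≤ (-x) ^ 2 := h2
      _ = x ^ 2 := by ring

lemma aux_layercake (μ : Measure ℝ) [IsProbabilityMeasure μ] {ε M Λ : ℝ}
    (hM : 0 < M) (hMΛ : M ≤ Λ) (hε : 0 ≤ ε)
    (htail : ∀ t : ℝ, M ≤ t → t * (μ (Set.Ioo (-t) t)ᶜ).toReal ≤ ε) :
    ∫ l, (min |l| Λ) ^ 2 ∂μ ≤ 2 * M ^ 2 + 2 * ε * Λ := by
  have hΛ : 0 < Λ := lt_of_lt_of_le hM hMΛ
  set f : ℝ → ℝ := fun l => min |l| Λ with hf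
  have hf_nn : ∀ l, 0 ≤ f l := fun l => le_min (abs_nonneg l) hΛ.le
  have hf_le : ∀ l, f l ≤ Λ := fun l => min_le_right _ _
  have hf_meas : Measurable f := measurable_abs.min measurable_const
  -- layer cake
  have hlc := lintegral_comp_eq_lintegral_meas_le_mul μ
      (f := f) (g := fun t => 2 * t)
      (Eventually.of_forall hf_nn) hf_meas.aemeasurable
      (fun t _ => (continuous_const.mul continuous_id).intervalIntegrable 0 t)
      ((ae_restrict_iff' measurableSet_Ioi).2 (ae_of_all _ fun t (ht : t ∈ Set.Ioi (0:ℝ)) => by simp at ht; positivity))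
  have h1 : ∀ ω, (∫ t in (0:ℝ)..(f ω), 2 * t) = (f ω) ^ 2 := fun ω => by
    rw [intervalIntegral.integral_const_mul, integral_id]; ring
  simp_rw [h1] at hlc
  -- integrability of f^2
  have hint : Integrable (fun l => (f l) ^ 2) μ := by
    refine (integrable_const (Λ ^ 2)).mono'
      ((hf_meas.pow_const 2).aestronglyMeasurable) (ae_of_all _ fun l => ?_)
    rw [Real.norm_eq_abs, abs_of_nonneg (by positivity)]
    exact pow_le_pow_left₀ (hf_nn l) (hf_le l) 2
  have hofreal : ENNReal.ofReal (∫ l, (f l) ^ 2 ∂μ) = ∫⁻ l, ENNReal.ofReal ((f l) ^ 2) ∂μ :=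
    ofReal_integral_eq_lintegral_ofReal hint (ae_of_all _ fun l => by positivity)
  -- bound the RHS of layer cake
  have hsplit : Set.Ioi (0:ℝ) = Set.Ioc 0 M ∪ Set.Ioi M := (Set.Ioc_union_Ioi_eq_Ioi hM.le).symm
  have hbound : (∫⁻ t in Set.Ioi (0:ℝ), μ {a : ℝ | t ≤ f a} * ENNReal.ofReal (2 * t))
      ≤ ENNReal.ofReal (2 * M ^ 2 + 2 * ε * Λ) := by
    rw [hsplit, lintegral_union measurableSet_Ioi (Set.Ioc_disjoint_Ioi le_rfl)]
    have part1 : (∫⁻ t in Set.Ioc (0:ℝ) M, μ {a : ℝ | t ≤ f a} * ENNReal.ofReal (2 * t))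
        ≤ ENNReal.ofReal (2 * M ^ 2) := by
      calc ∫⁻ t in Set.Ioc (0:ℝ) M, μ {a : ℝ | t ≤ f a} * ENNReal.ofReal (2 * t)
          ≤ ∫⁻ _ in Set.Ioc (0:ℝ) M, ENNReal.ofReal (2 * M) := by
            refine setLIntegral_mono measurable_const fun t ht => ?_
            calc μ {a : ℝ | t ≤ f a} * ENNReal.ofReal (2 * t)
                ≤ 1 * ENNReal.ofReal (2 * M) := by
                  exact mul_le_mul' prob_le_one (ENNReal.ofReal_le_ofReal (by linarith [ht.2]))
              _ = ENNReal.ofReal (2 * M) := one_mul _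
        _ = ENNReal.ofReal (2 * M) * volume (Set.Ioc (0:ℝ) M) := setLIntegral_const _ _
        _ = ENNReal.ofReal (2 * M) * ENNReal.ofReal M := by
            rw [Real.volume_Ioc, sub_zero]
        _ = ENNReal.ofReal (2 * M ^ 2) := by
            rw [← ENNReal.ofReal_mul (by linarith)]; ring_nf
    have part2 : (∫⁻ t in Set.Ioi M, μ {a : ℝ | t ≤ f a} * ENNReal.ofReal (2 * t))
        ≤ ENNReal.ofReal (2 * ε * Λ) := by
      have hpt : ∀ t ∈ Set.Ioi M, μ {a : ℝ | t ≤ f a} * ENNReal.ofReal (2 * t)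
          ≤ (Set.Ioc M Λ).indicator (fun _ => ENNReal.ofReal (2 * ε)) t := by
        intro t ht
        rcases le_or_gt t Λ with htΛ | htΛ
        · rw [Set.indicator_of_mem (Set.mem_Ioc.mpr ⟨ht, htΛ⟩)]
          have ht0 : (0:ℝ) < t := lt_of_le_of_lt hM.le ht
          have hsub : {a : ℝ | t ≤ f a} ⊆ (Set.Ioo (-t) t)ᶜ := by
            intro a ha hmem
            have : |a| < t := abs_lt.mpr ⟨hmem.1, hmem.2⟩
            have : f a < t := lt_of_le_of_lt (min_le_left _ _) this
            exact absurd ha (not_le.mpr this)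
          have hμ : μ {a : ℝ | t ≤ f a} ≤ ENNReal.ofReal (ε / t) := by
            refine le_trans (measure_mono hsub) ?_
            rw [ENNReal.le_ofReal_iff_toReal_le (measure_ne_top μ _) (by positivity)]
            rw [le_div_iff₀ ht0]
            calc (μ (Set.Ioo (-t) t)ᶜ).toReal * t = t * (μ (Set.Ioo (-t) t)ᶜ).toReal := by ring
              _ ≤ ε := htail t (le_of_lt ht)
          calc μ {a : ℝ | t ≤ f a} * ENNReal.ofReal (2 * t)
              ≤ ENNReal.ofReal (ε / t) * ENNReal.ofReal (2 * t) :=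
                mul_le_mul' hμ le_rfl
            _ = ENNReal.ofReal (ε / t * (2 * t)) := (ENNReal.ofReal_mul (by positivity)).symm
            _ = ENNReal.ofReal (2 * ε) := by rw [div_mul_eq_mul_div, mul_comm]
                                             field_simp
        · have : {a : ℝ | t ≤ f a} = ∅ := by
            ext a; simp only [Set.mem_setOf_eq, Set.mem_empty_iff_false, iff_false, not_le]
            exact lt_of_le_of_lt (hf_le a) htΛ
          rw [this, measure_empty, zero_mul]
          exact zero_le
      calc (∫⁻ t in Set.Ioi M, μ {a : ℝ | t ≤ f a} * ENNReal.ofReal (2 * t))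
          ≤ ∫⁻ t in Set.Ioi M, (Set.Ioc M Λ).indicator (fun _ => ENNReal.ofReal (2 * ε)) t :=
            setLIntegral_mono (measurable_const.indicator measurableSet_Ioc) hpt
        _ = ENNReal.ofReal (2 * ε) * volume (Set.Ioc M Λ ∩ Set.Ioi M) := by
            rw [lintegral_indicator measurableSet_Ioc, setLIntegral_const,
              Measure.restrict_apply measurableSet_Ioc]
        _ ≤ ENNReal.ofReal (2 * ε) * ENNReal.ofReal Λ := by
            refine mul_le_mul' le_rfl ?_
            refine le_trans (measure_mono (Set.inter_subset_left)) ?_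
            rw [Real.volume_Ioc]
            exact ENNReal.ofReal_le_ofReal (by linarith)
        _ = ENNReal.ofReal (2 * ε * Λ) := (ENNReal.ofReal_mul (by positivity)).symm
    calc _ ≤ ENNReal.ofReal (2 * M ^ 2) + ENNReal.ofReal (2 * ε * Λ) := add_le_add part1 part2
      _ = ENNReal.ofReal (2 * M ^ 2 + 2 * ε * Λ) := (ENNReal.ofReal_add (by positivity) (by positivity)).symm
  have := hofreal.trans_le (hlc.trans_le hbound)
  exact (ENNReal.ofReal_le_ofReal_iff (by positivity)).mp this

set_option maxHeartbeats 2000000 in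
theorem stmt_12 (μ : Measure ℝ) [IsProbabilityMeasure μ]
    (htail : Tendsto (fun Λ : ℝ => Λ * (μ (Set.Ioo (-Λ) Λ)ᶜ).toReal) atTop (𝓝 0)) :
    Tendsto (fun s : ℝ =>
        (∫ l in Set.Ioo (-(π / s)) (π / s), l ∂μ) - (1 / s) * ∫ l : ℝ, Real.sin (l * s) ∂μ)
      (𝓝[>] 0) (𝓝 0) := by
  rw [Metric.tendsto_nhdsWithin_nhds]
  intro ε hε
  have hπ := Real.pi_pos
  have hπgt := Real.pi_gt_three
  set ε' := ε / (8 * π + 8) with hε'def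
  have hε' : 0 < ε' := by positivity
  -- tail bound
  obtain ⟨M₀, hM₀⟩ := (Metric.tendsto_atTop.mp htail) ε' hε'
  set M := max M₀ 1 with hMdef
  have hM : (0:ℝ) < M := lt_of_lt_of_le one_pos (le_max_right _ _)
  have htail' : ∀ t : ℝ, M ≤ t → t * (μ (Set.Ioo (-t) t)ᶜ).toReal ≤ ε' := by
    intro t ht
    have h1 := hM₀ t (le_trans (le_max_left _ _) ht)
    rw [Real.dist_eq, sub_zero] at h1
    have ht0 : (0:ℝ) < t := lt_of_lt_of_le hM ht
    have : 0 ≤ t * (μ (Set.Ioo (-t) t)ᶜ).toReal := by positivity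
    rw [abs_of_nonneg this] at h1
    exact h1.le
  refine ⟨min (π / M) (ε / (8 * M ^ 2 + 8)), lt_min (by positivity) (by positivity), ?_⟩
  intro s hs hsd
  have hs0 : (0:ℝ) < s := hs
  rw [Real.dist_eq, sub_zero, abs_of_pos hs0] at hsd
  have hsδ1 : s < π / M := lt_of_lt_of_le hsd (min_le_left _ _)
  have hsδ2 : s < ε / (8 * M ^ 2 + 8) := lt_of_lt_of_le hsd (min_le_right _ _)
  set Λ := π / s with hΛdef
  have hΛ0 : 0 < Λ := by positivity
  have hMΛ : M ≤ Λ := by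
    rw [hΛdef, le_div_iff₀ hs0]
    refine le_of_lt (lt_of_lt_of_le (mul_lt_mul_of_pos_left hsδ1 hM) ?_)
    rw [mul_div_cancel₀ _ (ne_of_gt hM)]
  have hsΛ : s * Λ = π := by rw [hΛdef]; field_simp
  -- integrability facts
  have hsin_meas : AEStronglyMeasurable (fun l : ℝ => Real.sin (l * s)) μ :=
    (Real.continuous_sin.comp (continuous_id.mul continuous_const)).aestronglyMeasurable
  have habs_sin : ∀ x : ℝ, |Real.sin x| ≤ 1 := fun x =>
    abs_le.mpr ⟨Real.neg_one_le_sin x, Real.sin_le_one x⟩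
  have hint_sin : Integrable (fun l : ℝ => Real.sin (l * s)) μ := by
    refine (integrable_const 1).mono' hsin_meas (ae_of_all _ fun l => ?_)
    rw [Real.norm_eq_abs]; exact habs_sin _
  have hint_sins : Integrable (fun l : ℝ => Real.sin (l * s) / s) μ := hint_sin.div_const s
  have hint_id : IntegrableOn (fun l : ℝ => l) (Set.Ioo (-Λ) Λ) μ := by
    refine (integrable_const Λ).mono' aestronglyMeasurable_id.restrict ?_
    refine (ae_restrict_iff' measurableSet_Ioo).2 (ae_of_all _ fun l hl => ?_)
    rw [Real.norm_eq_abs]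
    exact (abs_lt.mpr ⟨hl.1, hl.2⟩).le
  have hmin_meas : Measurable (fun l : ℝ => (min |l| Λ) ^ 2) :=
    (measurable_abs.min measurable_const).pow_const 2
  have hint_min : Integrable (fun l : ℝ => s * (min |l| Λ) ^ 2) μ := by
    refine (integrable_const (s * Λ ^ 2)).mono'
      ((measurable_const.mul hmin_meas).aestronglyMeasurable) (ae_of_all _ fun l => ?_)
    have h1 : (0:ℝ) ≤ min |l| Λ := le_min (abs_nonneg l) hΛ0.le
    rw [Real.norm_eq_abs, abs_of_nonneg (by positivity)]
    have : (min |l| Λ) ^ 2 ≤ Λ ^ 2 := pow_le_pow_left₀ h1 (min_le_right _ _) 2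
    nlinarith
  -- decomposition
  have hdecomp : (∫ l in Set.Ioo (-Λ) Λ, l ∂μ) - (1 / s) * ∫ l : ℝ, Real.sin (l * s) ∂μ
      = (∫ l in Set.Ioo (-Λ) Λ, (l - Real.sin (l * s) / s) ∂μ)
        - ∫ l in (Set.Ioo (-Λ) Λ)ᶜ, Real.sin (l * s) / s ∂μ := by
    have h1 : (1 / s) * ∫ l : ℝ, Real.sin (l * s) ∂μ = ∫ l : ℝ, Real.sin (l * s) / s ∂μ := by
      rw [integral_div]; ring
    have h2 : (∫ l : ℝ, Real.sin (l * s) / s ∂μ)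
        = (∫ l in Set.Ioo (-Λ) Λ, Real.sin (l * s) / s ∂μ)
          + ∫ l in (Set.Ioo (-Λ) Λ)ᶜ, Real.sin (l * s) / s ∂μ :=
      (integral_add_compl measurableSet_Ioo hint_sins).symm
    have h3 : (∫ l in Set.Ioo (-Λ) Λ, (l - Real.sin (l * s) / s) ∂μ)
        = (∫ l in Set.Ioo (-Λ) Λ, l ∂μ) - ∫ l in Set.Ioo (-Λ) Λ, Real.sin (l * s) / s ∂μ :=
      integral_sub hint_id hint_sins.integrableOn
    rw [h1, h2, h3]; ring
  -- pointwise bound on the window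
  have hptwise : ∀ l ∈ Set.Ioo (-Λ) Λ, |l - Real.sin (l * s) / s| ≤ s * (min |l| Λ) ^ 2 := by
    intro l hl
    have habsl : |l| < Λ := abs_lt.mpr ⟨hl.1, hl.2⟩
    have hxpi : |l * s| ≤ π := by
      rw [abs_mul, abs_of_pos hs0]
      calc |l| * s ≤ Λ * s := by nlinarith [abs_nonneg l]
        _ = π := by rw [mul_comm]; exact hsΛ
    have hkey := aux_abs_sub_sin hxpi
    have heq : l - Real.sin (l * s) / s = (l * s - Real.sin (l * s)) / s := by field_simp
    rw [heq, abs_div, abs_of_pos hs0, div_le_iff₀ hs0, min_eq_left habsl.le]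
    calc |l * s - Real.sin (l * s)| ≤ (l * s) ^ 2 := hkey
      _ = s * |l| ^ 2 * s := by rw [sq_abs]; ring
  -- term A bound
  have htermA : |∫ l in Set.Ioo (-Λ) Λ, (l - Real.sin (l * s) / s) ∂μ|
      ≤ s * (2 * M ^ 2 + 2 * ε' * Λ) := by
    calc |∫ l in Set.Ioo (-Λ) Λ, (l - Real.sin (l * s) / s) ∂μ|
        ≤ ∫ l in Set.Ioo (-Λ) Λ, |l - Real.sin (l * s) / s| ∂μ := by
          simpa using norm_integral_le_integral_norm (μ := μ.restrict (Set.Ioo (-Λ) Λ))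
            (fun l => l - Real.sin (l * s) / s)
      _ ≤ ∫ l in Set.Ioo (-Λ) Λ, s * (min |l| Λ) ^ 2 ∂μ :=
          setIntegral_mono_on ((hint_id.sub hint_sins.integrableOn).abs)
            hint_min.integrableOn measurableSet_Ioo hptwise
      _ ≤ ∫ l : ℝ, s * (min |l| Λ) ^ 2 ∂μ := by
          refine setIntegral_le_integral hint_min (ae_of_all _ fun l => ?_)
          have h1 : (0:ℝ) ≤ min |l| Λ := le_min (abs_nonneg l) hΛ0.le
          positivity
      _ = s * ∫ l : ℝ, (min |l| Λ) ^ 2 ∂μ := integral_const_mul s _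
      _ ≤ s * (2 * M ^ 2 + 2 * ε' * Λ) :=
          mul_le_mul_of_nonneg_left (aux_layercake μ hM hMΛ hε'.le htail') hs0.le
  -- term B bound
  have htermB : |∫ l in (Set.Ioo (-Λ) Λ)ᶜ, Real.sin (l * s) / s ∂μ| ≤ ε' / π := by
    have hb1 : |∫ l in (Set.Ioo (-Λ) Λ)ᶜ, Real.sin (l * s) / s ∂μ|
        ≤ ∫ _ in (Set.Ioo (-Λ) Λ)ᶜ, (1 / s) ∂μ := by
      have hnorm := norm_integral_le_integral_norm
        (μ := μ.restrict ((Set.Ioo (-Λ) Λ)ᶜ)) (fun l => Real.sin (l * s) / s)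
      simp only [Real.norm_eq_abs] at hnorm
      refine le_trans hnorm ?_
      refine setIntegral_mono_on (hint_sins.integrableOn).abs
        (integrableOn_const (measure_ne_top μ _))
        measurableSet_Ioo.compl (fun l _ => ?_)
      rw [abs_div, abs_of_pos hs0, div_le_div_iff₀ hs0 hs0, one_mul]
      nlinarith [habs_sin (l * s)]
    rw [setIntegral_const, smul_eq_mul] at hb1
    refine hb1.trans ?_
    have h2 : (μ (Set.Ioo (-Λ) Λ)ᶜ).toReal * (1 / s)
        = (Λ * (μ (Set.Ioo (-Λ) Λ)ᶜ).toReal) / π := by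
      rw [hΛdef]; field_simp
    rw [measureReal_def, h2]
    exact (div_le_div_iff_of_pos_right hπ).mpr (htail' Λ hMΛ)
  -- conclusion
  rw [Real.dist_eq, sub_zero, hdecomp]
  have htri : |(∫ l in Set.Ioo (-Λ) Λ, (l - Real.sin (l * s) / s) ∂μ)
      - ∫ l in (Set.Ioo (-Λ) Λ)ᶜ, Real.sin (l * s) / s ∂μ|
      ≤ |∫ l in Set.Ioo (-Λ) Λ, (l - Real.sin (l * s) / s) ∂μ|
        + |∫ l in (Set.Ioo (-Λ) Λ)ᶜ, Real.sin (l * s) / s ∂μ| := abs_sub _ _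
  have hrw : s * (2 * M ^ 2 + 2 * ε' * Λ) = 2 * s * M ^ 2 + 2 * ε' * π := by
    rw [← hsΛ]; ring
  have h1 : 2 * s * M ^ 2 < ε / 4 := by
    have := (lt_div_iff₀ (by positivity : (0:ℝ) < 8 * M ^ 2 + 8)).mp hsδ2
    nlinarith [hs0.le, sq_nonneg M]
  have hεeq : ε' * (8 * π + 8) = ε := by
    rw [hε'def]; field_simp
  have h3 : ε' / π < ε' := div_lt_self hε' (by linarith)
  calc |(∫ l in Set.Ioo (-Λ) Λ, (l - Real.sin (l * s) / s) ∂μ)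
      - ∫ l in (Set.Ioo (-Λ) Λ)ᶜ, Real.sin (l * s) / s ∂μ|
      ≤ s * (2 * M ^ 2 + 2 * ε' * Λ) + ε' / π := htri.trans (add_le_add htermA htermB)
    _ = 2 * s * M ^ 2 + 2 * ε' * π + ε' / π := by rw [hrw]
    _ < ε := by nlinarith [h1, h3, hεeq, hε', hπgt]
end

section
/- Let H be a complex Hilbert space, U : ℝ → B(H) a strongly continuous one-parameter unitary group, and P a finite-rank orthogonal projection on H. Define V(s) = P U(s) P and, for N ≥ 1, Z_N(t) = ((V(t/N))^N)* (V(t/N))^N. Then the following are equivalent: (a) ‖V(s)* V(s) − P‖ / |s| → 0 as s → 0 (i.e. s ↦ V(s)*V(s) is differentiable at s = 0 in operator norm with derivative 0); (b) for every T > 0, sup_{|t|≤T} ‖Z_N(t) − P‖ → 0 as N → +∞. -/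
open ContinuousLinearMap Filter Topology

local notation "⟪" x ", " y "⟫" => @inner ℂ _ _ x y




section Aux1
variable {H : Type*} [NormedAddCommGroup H] [InnerProductSpace ℂ H] [CompleteSpace H]

lemma aux_norm_le {T : H →L[ℂ] H} (hT : IsSelfAdjoint T) {c : ℝ} (hc : 0 ≤ c)
    (h : ∀ x : H, ‖⟪T x, x⟫‖ ≤ c * ‖x‖ ^ 2) : ‖T‖ ≤ c := by
  have hswap : ∀ a b : H, ⟪T a, b⟫ = ⟪a, T b⟫ := by
    intro a b
    nth_rewrite 1 [← hT.adjoint_eq]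
    exact ContinuousLinearMap.adjoint_inner_left T b a
  have hre : ∀ a b : H, (⟪T a, b⟫).re = (⟪T b, a⟫).re := by
    intro a b
    rw [hswap]
    have := inner_re_symm (𝕜 := ℂ) a (T b)
    simpa using this
  have key2 : ∀ x y : H, 4 * (⟪T x, y⟫).re ≤ 2 * c * (‖x‖ ^ 2 + ‖y‖ ^ 2) := by
    intro x y
    have expand : (⟪T (x + y), x + y⟫).re - (⟪T (x - y), x - y⟫).re
        = 4 * (⟪T x, y⟫).re := by
      simp only [map_add, map_sub, inner_add_left, inner_add_right, inner_sub_left,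
        inner_sub_right, Complex.add_re, Complex.sub_re]
      rw [hre y x]
      ring
    have h1 : (⟪T (x + y), x + y⟫).re ≤ c * ‖x + y‖ ^ 2 := by
      calc (⟪T (x + y), x + y⟫).re ≤ ‖⟪T (x + y), x + y⟫‖ := Complex.re_le_norm _
        _ ≤ c * ‖x + y‖ ^ 2 := h _
    have h2 : -(⟪T (x - y), x - y⟫).re ≤ c * ‖x - y‖ ^ 2 := by
      calc -(⟪T (x - y), x - y⟫).re ≤ ‖⟪T (x - y), x - y⟫‖ := by
            rw [← norm_neg, ← Complex.neg_re]
            exact Complex.re_le_norm _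
        _ ≤ c * ‖x - y‖ ^ 2 := h _
    have hpar : ‖x + y‖ ^ 2 + ‖x - y‖ ^ 2 = 2 * (‖x‖ ^ 2 + ‖y‖ ^ 2) := by
      have := parallelogram_law_with_norm ℂ x y
      nlinarith [this]
    nlinarith [expand, h1, h2, hpar]
  refine ContinuousLinearMap.opNorm_le_bound T hc fun x => ?_
  rcases eq_or_ne (T x) 0 with h0 | h0
  · simp [h0]; positivity
  · have hTx : (0:ℝ) < ‖T x‖ := norm_pos_iff.mpr h0
    have hx : (0:ℝ) < ‖x‖ := by
      rcases eq_or_ne x 0 with rfl | hx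
      · simp at h0
      · exact norm_pos_iff.mpr hx
    set y : H := ((‖x‖ / ‖T x‖ : ℝ) : ℂ) • T x with hy
    have hyn : ‖y‖ = ‖x‖ := by
      rw [hy, norm_smul]
      simp [abs_of_nonneg (div_nonneg hx.le hTx.le), div_mul_cancel₀]
      rw [div_mul_cancel₀ _ hTx.ne']
    have hiy : (⟪T x, y⟫).re = ‖x‖ * ‖T x‖ := by
      rw [hy, inner_smul_right]
      have : ⟪T x, T x⟫ = ((‖T x‖ ^ 2 : ℝ) : ℂ) := by
        rw [inner_self_eq_norm_sq_to_K]; norm_cast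
      rw [this]
      push_cast
      simp
      rw [div_mul_eq_mul_div, mul_comm, pow_two]
      field_simp
      ring
      norm_cast
  
    have := key2 x y
    rw [hiy, hyn] at this
    -- 4 ‖x‖‖Tx‖ ≤ 4 c ‖x‖^2
    nlinarith [this, hx, hTx]
end Aux1



section Aux2
variable {K : Type*} [NormedAddCommGroup K] [InnerProductSpace ℂ K]
variable {ι : Type*} [Fintype ι]

lemma aux_parseval (b : OrthonormalBasis ι ℂ K) (x : K) :
    (∑ i, ‖⟪b i, x⟫‖ ^ 2 : ℝ) = ‖x‖ ^ 2 := by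
  have h := b.sum_inner_mul_inner x x
  have h2 : ∀ i, ⟪x, b i⟫ * ⟪b i, x⟫ = ((‖⟪b i, x⟫‖ ^ 2 : ℝ) : ℂ) := by
    intro i
    rw [← inner_conj_symm x (b i)]
    exact_mod_cast RCLike.conj_mul (K := ℂ) ⟪b i, x⟫
  rw [Finset.sum_congr rfl (fun i _ => h2 i)] at h
  have h3 : ⟪x, x⟫ = ((‖x‖ ^ 2 : ℝ) : ℂ) := by
    rw [inner_self_eq_norm_sq_to_K]; norm_cast
  rw [h3, ← Complex.ofReal_sum] at h
  exact_mod_cast h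

lemma aux_quad_form (b : OrthonormalBasis ι ℂ K) (T : K →ₗ[ℂ] K) (ν : ι → ℝ)
    (hb : ∀ i, T (b i) = (ν i : ℂ) • b i) (x : K) :
    ⟪T x, x⟫ = ((∑ i, ν i * ‖⟪b i, x⟫‖ ^ 2 : ℝ) : ℂ) := by
  have hTx : T x = ∑ i, (⟪b i, x⟫ * (ν i : ℂ)) • b i := by
    conv_lhs => rw [← b.sum_repr' x]
    rw [map_sum]
    refine Finset.sum_congr rfl fun i _ => ?_
    rw [map_smul, hb i, smul_smul]
  rw [hTx, sum_inner]
  rw [Complex.ofReal_sum]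
  refine Finset.sum_congr rfl fun i _ => ?_
  rw [inner_smul_left]
  have : (starRingEnd ℂ) (⟪b i, x⟫ * (ν i : ℂ)) = (starRingEnd ℂ) ⟪b i, x⟫ * (ν i : ℂ) := by
    rw [map_mul, Complex.conj_ofReal]
  rw [this]
  rw [mul_assoc, mul_comm ((ν i : ℂ)) _, ← mul_assoc]
  rw [mul_comm ((starRingEnd ℂ) ⟪b i, x⟫), Complex.mul_conj, Complex.normSq_eq_norm_sq]
  push_cast
  ring

lemma aux_det_eq_prod [FiniteDimensional ℂ K] {d : ℕ} (hd : Module.finrank ℂ K = d)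
    {T : K →ₗ[ℂ] K} (hT : T.IsSymmetric) :
    LinearMap.det T = ((∏ i, hT.eigenvalues hd i : ℝ) : ℂ) := by
  set b := hT.eigenvectorBasis hd
  rw [← LinearMap.det_toMatrix b.toBasis]
  have hm : LinearMap.toMatrix b.toBasis b.toBasis T
      = Matrix.diagonal (fun i => (hT.eigenvalues hd i : ℂ)) := by
    ext i j
    rw [LinearMap.toMatrix_apply]
    rw [OrthonormalBasis.coe_toBasis]
    have := hT.apply_eigenvectorBasis hd j
    rw [this, map_smul, Finsupp.smul_apply,
      OrthonormalBasis.coe_toBasis_repr_apply, OrthonormalBasis.repr_self]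
    by_cases hij : i = j
    · subst hij
      simp [Matrix.diagonal_apply, EuclideanSpace.single_apply]
    · simp [Matrix.diagonal_apply, hij, EuclideanSpace.single_apply, Ne.symm hij]
  rw [hm, Matrix.det_diagonal]
  push_cast
  rfl
end Aux2


set_option maxHeartbeats 4000000 in
theorem stmt_16 {H : Type*} [NormedAddCommGroup H] [InnerProductSpace ℂ H] [CompleteSpace H]
    (U : ℝ → H →L[ℂ] H) (hU0 : U 0 = 1) (hUadd : ∀ t s : ℝ, U (t + s) = U t * U s)
    (hUunitary : ∀ t : ℝ, adjoint (U t) * U t = 1 ∧ U t * adjoint (U t) = 1)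
    (hUcont : ∀ x : H, Continuous fun t : ℝ => U t x)
    (P : H →L[ℂ] H) (hPsa : adjoint P = P) (hPidem : P * P = P)
    (hPfin : FiniteDimensional ℂ (LinearMap.range (P : H →ₗ[ℂ] H)))
    (V : ℝ → H →L[ℂ] H) (hV : ∀ s : ℝ, V s = P * U s * P) :
    Tendsto (fun s : ℝ => ‖adjoint (V s) * V s - P‖ / |s|) (𝓝[≠] 0) (𝓝 0) ↔
      ∀ T > (0 : ℝ),
        TendstoUniformlyOn
          (fun (N : ℕ) (t : ℝ) => adjoint (V (t / N) ^ N) * V (t / N) ^ N)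
          (fun _ => P) atTop (Set.Icc (-T) T) := by
  -- ### basic facts
  have hPmove : ∀ a b : H, ⟪P a, b⟫ = ⟪a, P b⟫ := by
    intro a b
    nth_rewrite 1 [← hPsa]
    exact ContinuousLinearMap.adjoint_inner_left P b a
  have hPapp : ∀ x : H, P (P x) = P x := by
    intro x
    have := congrArg (fun (W : H →L[ℂ] H) => W x) hPidem
    simpa [ContinuousLinearMap.mul_apply] using this
  have hPx : ∀ x : H, ‖P x‖ ≤ ‖x‖ := by
    intro x
    have h1 : ⟪P x, P x⟫ = ⟪x, P x⟫ := by
      have h := hPmove x (P x)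
      rw [hPapp] at h
      exact h
    have h2 : (‖P x‖ ^ 2 : ℝ) ≤ ‖x‖ * ‖P x‖ := by
      have := norm_inner_le_norm (𝕜 := ℂ) x (P x)
      calc (‖P x‖ ^ 2 : ℝ) = ‖⟪P x, P x⟫‖ := by
            rw [inner_self_eq_norm_sq_to_K]
            norm_cast
            exact (abs_of_nonneg (by positivity)).symm
        _ = ‖⟪x, P x⟫‖ := by rw [h1]
        _ ≤ ‖x‖ * ‖P x‖ := norm_inner_le_norm _ _
    rcases eq_or_lt_of_le (norm_nonneg (P x)) with h0 | h0
    · rw [← h0]; exact norm_nonneg x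
    · nlinarith
  have hUiso : ∀ s (x : H), ‖U s x‖ = ‖x‖ := by
    intro s x
    have h1 : ⟪U s x, U s x⟫ = ⟪x, x⟫ := by
      rw [← ContinuousLinearMap.adjoint_inner_left (U s)]
      have : adjoint (U s) (U s x) = x := by
        have := congrArg (fun (W : H →L[ℂ] H) => W x) (hUunitary s).1
        simpa [ContinuousLinearMap.mul_apply] using this
      rw [this]
    have h2 : (‖U s x‖ ^ 2 : ℝ) = ‖x‖ ^ 2 := by
      have := h1
      rw [inner_self_eq_norm_sq_to_K, inner_self_eq_norm_sq_to_K] at this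
      exact_mod_cast this
    calc ‖U s x‖ = √(‖U s x‖ ^ 2) := (Real.sqrt_sq (norm_nonneg _)).symm
      _ = √(‖x‖ ^ 2) := by rw [h2]
      _ = ‖x‖ := Real.sqrt_sq (norm_nonneg _)
  have hVapp : ∀ s (x : H), V s x = P (U s (P x)) := by
    intro s x
    rw [hV]
    simp [ContinuousLinearMap.mul_apply]
  have hVx : ∀ s (x : H), ‖V s x‖ ≤ ‖P x‖ := by
    intro s x
    rw [hVapp]
    calc ‖P (U s (P x))‖ ≤ ‖U s (P x)‖ := hPx _
      _ = ‖P x‖ := hUiso _ _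
  have hVx' : ∀ s (x : H), ‖V s x‖ ≤ ‖x‖ := fun s x => (hVx s x).trans (hPx x)
  have hPV : ∀ s, P * V s = V s := by
    intro s
    rw [hV, ← mul_assoc, ← mul_assoc, hPidem]
  have hVP : ∀ s, V s * P = V s := by
    intro s
    rw [hV, mul_assoc, mul_assoc, hPidem, ← mul_assoc]
  have hPVapp : ∀ s (x : H), P (V s x) = V s x := by
    intro s x
    have := congrArg (fun (W : H →L[ℂ] H) => W x) (hPV s)
    simpa [ContinuousLinearMap.mul_apply] using this
  have hVpowP : ∀ s (n : ℕ) (x : H), (V s ^ (n + 1)) x = (V s ^ (n + 1)) (P x) := by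
    intro s n x
    have : V s ^ (n + 1) * P = V s ^ (n + 1) := by
      rw [pow_succ, mul_assoc, hVP]
    conv_lhs => rw [← this]
    simp [ContinuousLinearMap.mul_apply]
  have hPpow : ∀ s (n : ℕ) (x : H), P ((V s ^ (n + 1)) x) = (V s ^ (n + 1)) x := by
    intro s n x
    have : P * V s ^ (n + 1) = V s ^ (n + 1) := by
      rw [pow_succ', ← mul_assoc, hPV]
    have := congrArg (fun (W : H →L[ℂ] H) => W x) this
    simpa [ContinuousLinearMap.mul_apply] using this
  have hq : ∀ (W : H →L[ℂ] H) (x : H), ⟪(adjoint W * W) x, x⟫ = ((‖W x‖ ^ 2 : ℝ) : ℂ) := by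
    intro W x
    rw [ContinuousLinearMap.mul_apply, ContinuousLinearMap.adjoint_inner_left,
      inner_self_eq_norm_sq_to_K]
    norm_cast
  have hqP : ∀ x : H, ⟪P x, x⟫ = ((‖P x‖ ^ 2 : ℝ) : ℂ) := by
    intro x
    have h1 : ⟪P x, x⟫ = ⟪P x, P x⟫ := by
      nth_rewrite 1 [← hPapp x]
      exact hPmove (P x) x
    rw [h1, inner_self_eq_norm_sq_to_K]
    norm_cast
  have hPsa' : IsSelfAdjoint P := by
    rw [ContinuousLinearMap.isSelfAdjoint_iff']
    exact hPsa
  have hWsa : ∀ (W : H →L[ℂ] H), IsSelfAdjoint (adjoint W * W) := by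
    intro W
    rw [IsSelfAdjoint, star_mul, ContinuousLinearMap.star_eq_adjoint,
      ContinuousLinearMap.star_eq_adjoint, ContinuousLinearMap.adjoint_adjoint]
  -- quadratic form of P - adjoint W * W, for W with ‖W x‖ ≤ ‖P x‖ and W = W P
  have hquad : ∀ (W : H →L[ℂ] H) (x : H),
      ⟪(P - adjoint W * W) x, x⟫ = ((‖P x‖ ^ 2 - ‖W x‖ ^ 2 : ℝ) : ℂ) := by
    intro W x
    rw [ContinuousLinearMap.sub_apply, inner_sub_left, hq, hqP]
    push_cast
    ring
  -- `g s` bound: ‖P - A s‖ ≤ 1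
  have hg_le_one : ∀ s, ‖adjoint (V s) * V s - P‖ ≤ 1 := by
    intro s
    rw [norm_sub_rev]
    refine aux_norm_le ((hPsa').sub (hWsa (V s))) zero_le_one ?_
    intro x
    rw [hquad]
    rw [Complex.norm_real, Real.norm_eq_abs]
    rw [abs_le]
    constructor
    · have := hVx s x
      have h2 := hPx x
      nlinarith [norm_nonneg (V s x), norm_nonneg (P x), norm_nonneg x]
    · have := hVx s x
      have h2 := hPx x
      nlinarith [norm_nonneg (V s x), norm_nonneg (P x), norm_nonneg x]
  constructor
  · -- (a) → (b)
    intro ha T hT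
    rw [Metric.tendstoUniformlyOn_iff]
    intro ε hε
    rw [Metric.tendsto_nhdsWithin_nhds] at ha
    obtain ⟨δ, hδ, hag⟩ := ha (ε / (2 * T)) (div_pos hε (by linarith))
    have hN₀ : ∃ N₀ : ℕ, (N₀ : ℝ) > T / δ ∧ 1 ≤ N₀ := by
      obtain ⟨N₀, hN₀⟩ := exists_nat_gt (max (T / δ) 1)
      exact ⟨N₀, lt_of_le_of_lt (le_max_left _ _) hN₀,
        by exact_mod_cast (lt_of_le_of_lt (le_max_right _ _) hN₀).le⟩
    obtain ⟨N₀, hN₀gt, hN₀1⟩ := hN₀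
    rw [eventually_atTop]
    refine ⟨N₀, fun N hN t ht => ?_⟩
    have hN1 : 1 ≤ N := le_trans hN₀1 hN
    have hNpos : (0 : ℝ) < N := by exact_mod_cast hN1
    have htT : |t| ≤ T := abs_le.mpr ⟨ht.1, ht.2⟩
    set s := t / N with hs
    -- g s ≤ (ε / (2 T)) * |s|
    have hgs : ‖adjoint (V s) * V s - P‖ ≤ ε / (2 * T) * |s| := by
      rcases eq_or_ne t 0 with rfl | ht0
      · have hs0 : s = 0 := by simp [hs]
        have hV0 : V 0 = P := by rw [hV, hU0, mul_one, hPidem]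
        rw [hs0, hV0, hPsa, hPidem, sub_self]
        simp
      · have hs0 : s ≠ 0 := div_ne_zero ht0 (by positivity)
        have hsδ : |s| < δ := by
          rw [hs, abs_div, abs_of_pos hNpos]
          rw [div_lt_iff₀ hNpos]
          calc |t| ≤ T := htT
            _ < δ * N := by
              rw [← div_lt_iff₀' hδ]
              exact lt_of_lt_of_le (by exact_mod_cast hN₀gt) (by exact_mod_cast hN)
        have := hag hs0 (by simpa [Real.dist_eq] using hsδ)
        rw [Real.dist_eq, sub_zero] at this
        have habs : |s| > 0 := abs_pos.mpr hs0
        have h2 : ‖adjoint (V s) * V s - P‖ / |s| < ε / (2 * T) := by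
          have hnn : 0 ≤ ‖adjoint (V s) * V s - P‖ / |s| := by positivity
          rwa [abs_of_nonneg hnn] at this
        rw [div_lt_iff₀ habs] at h2
        exact h2.le
    set g := ‖adjoint (V s) * V s - P‖ with hgdef
    have hg0 : 0 ≤ g := norm_nonneg _
    have hg1 : g ≤ 1 := hg_le_one s
    -- lower bound for iterated V on range of P
    have hVlow : ∀ x : H, P x = x → (1 - g) * ‖x‖ ^ 2 ≤ ‖V s x‖ ^ 2 := by
      intro x hx
      have h1 : ‖⟪(P - (adjoint (V s) * V s)) x, x⟫‖ ≤ g * ‖x‖ ^ 2 := by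
        calc ‖⟪(P - (adjoint (V s) * V s)) x, x⟫‖
            ≤ ‖(P - (adjoint (V s) * V s)) x‖ * ‖x‖ := norm_inner_le_norm _ _
          _ ≤ ‖P - (adjoint (V s) * V s)‖ * ‖x‖ * ‖x‖ := by
              have := ContinuousLinearMap.le_opNorm (P - (adjoint (V s) * V s)) x
              nlinarith [norm_nonneg x]
          _ = g * ‖x‖ ^ 2 := by
              rw [← norm_sub_rev]
              ring
      rw [hquad] at h1
      rw [Complex.norm_real, Real.norm_eq_abs] at h1
      rw [hx] at h1
      have := abs_le.mp h1
      nlinarith [this.1, this.2]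
    have hiter : ∀ (n : ℕ) (x : H), P x = x → (1 - g) ^ n * ‖x‖ ^ 2 ≤ ‖(V s ^ n) x‖ ^ 2 := by
      intro n
      induction n with
      | zero => intro x hx; simp
      | succ n ih =>
        intro x hx
        have h1 : (V s ^ (n + 1)) x = (V s ^ n) (V s x) := by
          rw [pow_succ, ContinuousLinearMap.mul_apply]
        rw [h1]
        have h2 := ih (V s x) (hPVapp s x)
        have h3 := hVlow x hx
        have hgn : (0:ℝ) ≤ (1 - g) ^ n := pow_nonneg (by linarith) n
        calc (1 - g) ^ (n + 1) * ‖x‖ ^ 2 = (1 - g) ^ n * ((1 - g) * ‖x‖ ^ 2) := by ring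
          _ ≤ (1 - g) ^ n * ‖V s x‖ ^ 2 := by
              exact mul_le_mul_of_nonneg_left h3 hgn
          _ ≤ ‖(V s ^ n) (V s x)‖ ^ 2 := h2
    have hcontr : ∀ (n : ℕ) (x : H), ‖(V s ^ n) x‖ ≤ ‖x‖ := by
      intro n
      induction n with
      | zero => intro x; simp
      | succ n ih =>
        intro x
        rw [pow_succ, ContinuousLinearMap.mul_apply]
        exact le_trans (ih (V s x)) (hVx' s x)
    -- norm bound for P - Z_N
    have hZ : ‖P - (adjoint (V s ^ N) * V s ^ N)‖ ≤ 1 - (1 - g) ^ N := by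
      have hc : (0:ℝ) ≤ 1 - (1 - g) ^ N := by
        have : (1 - g) ^ N ≤ 1 := pow_le_one₀ (by linarith) (by linarith)
        linarith
      refine aux_norm_le ((hPsa').sub (hWsa (V s ^ N))) hc ?_
      intro x
      rw [hquad, Complex.norm_real, Real.norm_eq_abs, abs_le]
      obtain ⟨n, rfl⟩ : ∃ n, N = n + 1 := ⟨N - 1, by omega⟩
      have hup : ‖(V s ^ (n+1)) x‖ ≤ ‖P x‖ := by
        rw [hVpowP s n x]
        exact hcontr (n+1) (P x)
      have hlow : (1 - g) ^ (n+1) * ‖P x‖ ^ 2 ≤ ‖(V s ^ (n+1)) x‖ ^ 2 := by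
        rw [hVpowP s n x]
        exact hiter (n+1) (P x) (hPapp x)
      have hPxx := hPx x
      constructor
      · nlinarith [norm_nonneg ((V s ^ (n+1)) x), norm_nonneg (P x)]
      · have hsq : ‖P x‖ ^ 2 ≤ ‖x‖ ^ 2 := by nlinarith [norm_nonneg (P x)]
        have h2 := mul_le_mul_of_nonneg_left hsq hc
        nlinarith [hlow]
    -- conclude
    show dist P (adjoint (V s ^ N) * V s ^ N) < ε
    rw [dist_eq_norm]
    have hNs : (N:ℝ) * |s| = |t| := by
      rw [hs, abs_div, abs_of_pos hNpos]
      field_simp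
    have hber : 1 - (1 - g) ^ N ≤ N * g := by
      have h := one_add_mul_le_pow (a := -g) (by linarith) N
      have h2 : (1 + -g : ℝ) = 1 - g := by ring
      rw [h2] at h
      linarith
    calc ‖P - adjoint (V s ^ N) * V s ^ N‖ ≤ 1 - (1 - g) ^ N := hZ
      _ ≤ N * g := hber
      _ ≤ N * (ε / (2 * T) * |s|) := by
          apply mul_le_mul_of_nonneg_left hgs (by positivity)
      _ = ε / (2 * T) * ((N : ℝ) * |s|) := by ring
      _ = ε / (2 * T) * |t| := by rw [hNs]
      _ ≤ ε / (2 * T) * T := by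
          apply mul_le_mul_of_nonneg_left htT
          positivity
      _ = ε / 2 := by
          field_simp
      _ < ε := by linarith
  · -- (b) → (a)
    intro hb
    set K := LinearMap.range (P : H →ₗ[ℂ] H) with hKdef
    haveI : FiniteDimensional ℂ K := hPfin
    by_cases hP0 : P = 0
    · have hfun : (fun s : ℝ => ‖adjoint (V s) * V s - P‖ / |s|) = fun _ : ℝ => 0 := by
        funext s
        have hV0 : V s = 0 := by rw [hV, hP0]; simp
        rw [hV0, hP0]
        simp [← ContinuousLinearMap.star_eq_adjoint]
      rw [hfun]
      exact tendsto_const_nhds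
    have hmemP : ∀ x : H, P x ∈ K := fun x => LinearMap.mem_range.mpr ⟨x, rfl⟩
    have hPfix : ∀ x : H, x ∈ K → P x = x := by
      intro x hx
      obtain ⟨y, hy⟩ := hx
      rw [← hy]
      exact hPapp y
    set d := Module.finrank ℂ K with hddef
    have hd : Module.finrank ℂ K = d := rfl
    have hd0 : 0 < d := by
      rcases Nat.eq_zero_or_pos d with h0 | hpos
      · exfalso
        apply hP0
        have hKbot : K = ⊥ := Submodule.finrank_eq_zero.mp (hd.trans h0)
        ext x
        have := hmemP x
        rw [hKbot] at this
        simpa using this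
      · exact hpos
    haveI : Nonempty (Fin d) := Fin.pos_iff_nonempty.mp hd0
    have hmemV : ∀ (s : ℝ) (x : H), V s x ∈ K := by
      intro s x
      rw [hVapp]
      exact hmemP _
    set w : ℝ → (K →ₗ[ℂ] K) :=
      fun s => ((V s : H →ₗ[ℂ] H)).restrict (p := K) (q := K) (fun x _ => hmemV s x) with hwdef
    have hwcoe : ∀ (s : ℝ) (x : K), ((w s x : K) : H) = V s (x : H) := fun s x => rfl
    have hwpow : ∀ (s : ℝ) (n : ℕ) (x : K), (((w s ^ n) x : K) : H) = (V s ^ n) (x : H) := by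
      intro s n
      induction n with
      | zero => intro x; simp
      | succ n ih =>
        intro x
        rw [pow_succ, pow_succ, Module.End.mul_apply, ContinuousLinearMap.mul_apply,
          ih (w s x), hwcoe s x]
    have hsym : ∀ (u : K →ₗ[ℂ] K), LinearMap.IsSymmetric (LinearMap.adjoint u * u) := by
      intro u x y
      rw [Module.End.mul_apply, Module.End.mul_apply, LinearMap.adjoint_inner_left,
        LinearMap.adjoint_inner_right]
    have hqK : ∀ (u : K →ₗ[ℂ] K) (x : K),
        ⟪(LinearMap.adjoint u * u) x, x⟫ = ((‖u x‖ ^ 2 : ℝ) : ℂ) := by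
      intro u x
      rw [Module.End.mul_apply, LinearMap.adjoint_inner_left, inner_self_eq_norm_sq_to_K]
      norm_cast
    have heig : ∀ (u : K →ₗ[ℂ] K) (i : Fin d),
        ((hsym u).eigenvalues hd i : ℝ) = ‖u ((hsym u).eigenvectorBasis hd i)‖ ^ 2 := by
      intro u i
      have h1 := hqK u ((hsym u).eigenvectorBasis hd i)
      rw [(hsym u).apply_eigenvectorBasis] at h1
      rw [inner_smul_left, RCLike.conj_ofReal] at h1
      have hb1 : ⟪(hsym u).eigenvectorBasis hd i, (hsym u).eigenvectorBasis hd i⟫ = (1 : ℂ) := by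
        rw [inner_self_eq_norm_sq_to_K, ((hsym u).eigenvectorBasis hd).orthonormal.1 i]
        norm_num
      rw [hb1, mul_one] at h1
      exact Complex.ofReal_inj.mp h1
    have hdetprod : ∀ (s : ℝ) (n : ℕ),
        LinearMap.det (LinearMap.adjoint (w s ^ n) * (w s ^ n))
          = LinearMap.det (LinearMap.adjoint (w s) * w s) ^ n := by
      intro s n
      rw [← LinearMap.star_eq_adjoint, ← LinearMap.star_eq_adjoint, star_pow]
      rw [map_mul, map_pow, map_pow, ← mul_pow, ← map_mul]
    -- the epsilon-delta argument
    rw [Metric.tendsto_nhdsWithin_nhds]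
    intro ε hε
    set c₀ := ε / (2 * d + 2) with hc₀
    have hc₀pos : 0 < c₀ := by positivity
    set ε' := 1 - Real.exp (-c₀) with hε'def
    have hexp_lt : Real.exp (-c₀) < 1 := by
      rw [← Real.exp_zero]
      exact Real.exp_lt_exp.mpr (by linarith)
    have hε'pos : 0 < ε' := by rw [hε'def]; linarith
    have hb1 := hb 1 one_pos
    rw [Metric.tendstoUniformlyOn_iff] at hb1
    obtain ⟨N₀, hN₀⟩ := eventually_atTop.mp (hb1 ε' hε'pos)
    set M := max N₀ 1 with hM
    have hM1 : (1 : ℕ) ≤ M := le_max_right N₀ 1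
    refine ⟨1 / (M + 1 : ℝ), by positivity, ?_⟩
    intro s hss hsd
    have hs0 : s ≠ 0 := hss
    have habs : 0 < |s| := abs_pos.mpr hs0
    rw [Real.dist_eq, sub_zero] at hsd
    set N := ⌊1 / |s|⌋₊ with hNdef
    have hMr : (1:ℝ) ≤ (M:ℝ) := by exact_mod_cast hM1
    have hinv : (M + 1 : ℝ) < 1 / |s| := by
      rw [lt_div_iff₀ habs]
      calc (M + 1 : ℝ) * |s| < (M + 1 : ℝ) * (1 / (M + 1 : ℝ)) := by
            apply mul_lt_mul_of_pos_left hsd (by positivity)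
        _ = 1 := by field_simp
    have hNM : M + 1 ≤ N := by
      apply Nat.le_floor
      push_cast
      exact hinv.le
    have hNN₀ : N₀ ≤ N := le_trans (le_trans (le_max_left _ _) (Nat.le_succ M)) hNM
    have hN1 : 1 ≤ N := le_trans (le_trans hM1 (Nat.le_succ M)) hNM
    have hNpos : (0:ℝ) < (N:ℝ) := by exact_mod_cast hN1
    have hNle : (N : ℝ) ≤ 1 / |s| := Nat.floor_le (by positivity)
    have hNs_le : (N:ℝ) * |s| ≤ 1 := by
      rw [← le_div_iff₀ habs]
      exact hNle
    have hNs_ge : (1:ℝ)/2 < (N:ℝ) * |s| := by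
      have h1 : 1 / |s| < (N:ℝ) + 1 := Nat.lt_floor_add_one (1 / |s|)
      rw [div_lt_iff₀ habs] at h1
      have hs_half : |s| < 1/2 := by
        calc |s| < 1 / (M + 1 : ℝ) := hsd
          _ ≤ 1 / 2 := by
              apply one_div_le_one_div_of_le (by norm_num)
              linarith
      nlinarith
    -- apply the uniform convergence at t = N * s
    have ht : (N:ℝ) * s ∈ Set.Icc (-1:ℝ) 1 := by
      have h1 : |(N:ℝ) * s| ≤ 1 := by
        rw [abs_mul, abs_of_nonneg hNpos.le]
        exact hNs_le
      exact ⟨(abs_le.mp h1).1, (abs_le.mp h1).2⟩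
    have hDlt : dist P (adjoint (V (((N:ℝ) * s) / (N:ℕ)) ^ N) * V (((N:ℝ) * s) / (N:ℕ)) ^ N) < ε' :=
      hN₀ N hNN₀ ((N:ℝ) * s) ht
    have hts : ((N:ℝ) * s) / ((N:ℕ) : ℝ) = s := by
      field_simp
    rw [hts, dist_eq_norm] at hDlt
    set D := ‖P - adjoint (V s ^ N) * V s ^ N‖ with hDdef
    -- eigenvalues of A' := adjoint (w s) * w s
    set μ := (hsym (w s)).eigenvalues hd with hμdef
    set bA := (hsym (w s)).eigenvectorBasis hd with hbAdef
    have hμnorm : ∀ i, (μ i : ℝ) = ‖w s (bA i)‖ ^ 2 := fun i => heig (w s) i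
    have hμ0 : ∀ i, 0 ≤ μ i := fun i => by rw [hμnorm i]; positivity
    have hμ1 : ∀ i, μ i ≤ 1 := by
      intro i
      rw [hμnorm i]
      have h1 : ‖w s (bA i)‖ = ‖V s ((bA i : K) : H)‖ := by rw [Submodule.coe_norm, hwcoe]
      have h2 : ‖V s ((bA i : K) : H)‖ ≤ ‖((bA i : K) : H)‖ := hVx' s _
      have h3 : ‖((bA i : K) : H)‖ = 1 := by
        rw [← Submodule.coe_norm]
        exact bA.orthonormal.1 i
      nlinarith [norm_nonneg (w s (bA i))]
    obtain ⟨i₀, _, hi₀⟩ := Finset.exists_min_image Finset.univ μ ⟨Classical.arbitrary (Fin d), Finset.mem_univ _⟩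
    set g := ‖adjoint (V s) * V s - P‖ with hgdef
    -- key norm bound : g ≤ 1 - μ i₀
    have hg_le : g ≤ 1 - μ i₀ := by
      rw [hgdef, norm_sub_rev]
      refine aux_norm_le (hPsa'.sub (hWsa (V s))) (by linarith [hμ1 i₀, hμ0 i₀]) ?_
      intro y
      rw [hquad, Complex.norm_real, Real.norm_eq_abs]
      set yh : K := (⟨P y, hmemP y⟩ : K) with hyh
      have hVy : ‖V s y‖ = ‖w s yh‖ := by
        have h1 : V s y = V s (P y) := by
          conv_lhs => rw [← hVP s]
          rw [ContinuousLinearMap.mul_apply]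
        rw [h1, Submodule.coe_norm, hwcoe]
      have hPy : ‖P y‖ = ‖yh‖ := by rw [Submodule.coe_norm]
      have hTb : ∀ i, ((1 : K →ₗ[ℂ] K) - (LinearMap.adjoint (w s) * w s)) (bA i)
          = (((1 - μ i : ℝ)) : ℂ) • bA i := by
        intro i
        rw [LinearMap.sub_apply, Module.End.one_apply, (hsym (w s)).apply_eigenvectorBasis]
        push_cast
        rw [sub_smul, one_smul]
        rfl
      have hexp := aux_quad_form bA ((1 : K →ₗ[ℂ] K) - (LinearMap.adjoint (w s) * w s))
        (fun i => 1 - μ i) hTb yh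
      have hlhs : ⟪((1 : K →ₗ[ℂ] K) - (LinearMap.adjoint (w s) * w s)) yh, yh⟫
          = ((‖yh‖ ^ 2 - ‖w s yh‖ ^ 2 : ℝ) : ℂ) := by
        rw [LinearMap.sub_apply, inner_sub_left, Module.End.one_apply,
          inner_self_eq_norm_sq_to_K, hqK]
        simp only [show ∀ r : ℝ, (RCLike.ofReal r : ℂ) = Complex.ofReal r from fun _ => rfl]
        push_cast
        ring
      have heq : (‖yh‖ ^ 2 - ‖w s yh‖ ^ 2 : ℝ) = ∑ i, (1 - μ i) * ‖⟪bA i, yh⟫‖ ^ 2 := by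
        have h1 := hlhs.symm.trans hexp
        exact_mod_cast h1
      have hparse := aux_parseval bA yh
      have hbound : (‖yh‖ ^ 2 - ‖w s yh‖ ^ 2 : ℝ) ≤ (1 - μ i₀) * ‖yh‖ ^ 2 := by
        rw [heq, ← hparse, Finset.mul_sum]
        apply Finset.sum_le_sum
        intro i _
        apply mul_le_mul_of_nonneg_right (by linarith [hi₀ i (Finset.mem_univ i)]) (by positivity)
      have hge0 : (0:ℝ) ≤ ‖yh‖ ^ 2 - ‖w s yh‖ ^ 2 := by
        rw [heq]
        apply Finset.sum_nonneg
        intro i _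
        exact mul_nonneg (by linarith [hμ1 i]) (by positivity)
      rw [hVy, hPy, abs_of_nonneg hge0]
      calc ‖yh‖ ^ 2 - ‖w s yh‖ ^ 2 ≤ (1 - μ i₀) * ‖yh‖ ^ 2 := hbound
        _ ≤ (1 - μ i₀) * ‖y‖ ^ 2 := by
            apply mul_le_mul_of_nonneg_left ?_ (by linarith [hμ1 i₀, hμ0 i₀])
            have h1 : ‖yh‖ = ‖P y‖ := hPy.symm
            have h2 := hPx y
            nlinarith [norm_nonneg (P y)]
    -- eigenvalues of Z' := adjoint (w s ^ N) * w s ^ N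
    set ν := (hsym (w s ^ N)).eigenvalues hd with hνdef
    set bZ := (hsym (w s ^ N)).eigenvectorBasis hd with hbZdef
    have hνnorm : ∀ i, (ν i : ℝ) = ‖(w s ^ N) (bZ i)‖ ^ 2 := fun i => heig (w s ^ N) i
    have hν0 : ∀ i, 0 ≤ ν i := fun i => by rw [hνnorm i]; positivity
    have hν_ge : ∀ i, 1 - ε' ≤ ν i := by
      intro i
      have hx1 : ‖((bZ i : K) : H)‖ = 1 := by
        rw [← Submodule.coe_norm]
        exact bZ.orthonormal.1 i
      have hPxe : P ((bZ i : K) : H) = ((bZ i : K) : H) := hPfix _ (bZ i).2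
      have hq1 := hquad (V s ^ N) ((bZ i : K) : H)
      have hCS : ‖⟪(P - adjoint (V s ^ N) * V s ^ N) ((bZ i : K) : H), ((bZ i : K) : H)⟫‖
          ≤ D := by
        calc ‖⟪(P - adjoint (V s ^ N) * V s ^ N) ((bZ i : K) : H), ((bZ i : K) : H)⟫‖
            ≤ ‖(P - adjoint (V s ^ N) * V s ^ N) ((bZ i : K) : H)‖ * ‖((bZ i : K) : H)‖ :=
              norm_inner_le_norm _ _
          _ ≤ D * ‖((bZ i : K) : H)‖ * ‖((bZ i : K) : H)‖ := by
              have h1 := ContinuousLinearMap.le_opNorm (P - adjoint (V s ^ N) * V s ^ N)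
                ((bZ i : K) : H)
              rw [hx1]
              simpa [hx1] using h1
          _ = D := by rw [hx1]; ring
      rw [hq1, Complex.norm_real, Real.norm_eq_abs] at hCS
      have hVN : ‖(V s ^ N) ((bZ i : K) : H)‖ ^ 2 = ν i := by
        rw [hνnorm i, Submodule.coe_norm, hwpow]
      have habs2 := (abs_le.mp hCS).2
      rw [hPxe, hx1, hVN] at habs2
      norm_num at habs2
      linarith [hDlt]
    -- determinant chain
    have hdetA := aux_det_eq_prod hd (hsym (w s))
    have hdetZ := aux_det_eq_prod hd (hsym (w s ^ N))
    have hdet_eq := hdetprod s N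
    rw [hdetA, hdetZ, ← Complex.ofReal_pow] at hdet_eq
    have hprod_eq : (∏ i, ν i : ℝ) = (∏ i, μ i : ℝ) ^ N := by exact_mod_cast hdet_eq
    have hprodν_ge : (1 - ε') ^ d ≤ ∏ i, ν i := by
      calc (1 - ε') ^ d = ∏ _i : Fin d, (1 - ε') := by
            rw [Finset.prod_const, Finset.card_univ, Fintype.card_fin]
        _ ≤ ∏ i, ν i := by
            apply Finset.prod_le_prod
            · intro i _
              rw [hε'def]
              simp [Real.exp_nonneg]
            · intro i _
              exact hν_ge i
    have hprodμ0 : 0 ≤ (∏ i, μ i : ℝ) := Finset.prod_nonneg fun i _ => hμ0 i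
    have hprodμ_le : (∏ i, μ i : ℝ) ≤ 1 - g := by
      calc (∏ i, μ i : ℝ) = μ i₀ * ∏ i ∈ Finset.univ.erase i₀, μ i :=
            (Finset.mul_prod_erase _ _ (Finset.mem_univ i₀)).symm
        _ ≤ μ i₀ * 1 := by
            apply mul_le_mul_of_nonneg_left ?_ (hμ0 i₀)
            exact Finset.prod_le_one (fun i _ => hμ0 i) (fun i _ => hμ1 i)
        _ ≤ 1 - g := by rw [mul_one]; linarith [hg_le]
    have hg0 : (0:ℝ) ≤ g := norm_nonneg _
    have hg1 : g ≤ 1 := by linarith [hg_le, hμ0 i₀]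
    have hkey : Real.exp (-(c₀ * d)) ≤ (1 - g) ^ N := by
      have h1 : (1 - ε' : ℝ) = Real.exp (-c₀) := by rw [hε'def]; ring
      have h2 : Real.exp (-(c₀ * d)) = (1 - ε') ^ d := by
        rw [h1, ← Real.exp_nat_mul]
        congr 1
        ring
      calc Real.exp (-(c₀ * d)) = (1 - ε') ^ d := h2
        _ ≤ ∏ i, ν i := hprodν_ge
        _ = (∏ i, μ i : ℝ) ^ N := hprod_eq
        _ ≤ (1 - g) ^ N := pow_le_pow_left₀ hprodμ0 hprodμ_le N
    have h1g_pos : 0 < 1 - g := by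
      rcases eq_or_lt_of_le (by linarith : (0:ℝ) ≤ 1 - g) with h0 | h0
      · exfalso
        have : (1 - g : ℝ) ^ N = 0 := by
          rw [← h0]
          exact zero_pow (by omega)
        rw [this] at hkey
        exact absurd hkey (not_le.mpr (Real.exp_pos _))
      · exact h0
    have hlog : -(c₀ * d) ≤ (N:ℝ) * Real.log (1 - g) := by
      have h1 := Real.log_le_log (Real.exp_pos (-(c₀ * d))) hkey
      rwa [Real.log_exp, Real.log_pow] at h1
    have hloggle : Real.log (1 - g) ≤ -g := by
      have := Real.log_le_sub_one_of_pos h1g_pos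
      linarith
    have hNg : (N:ℝ) * g ≤ c₀ * d := by
      have h2 : (N:ℝ) * Real.log (1 - g) ≤ (N:ℝ) * (-g) :=
        mul_le_mul_of_nonneg_left hloggle hNpos.le
      nlinarith [hlog, h2]
    -- final numeric computation
    have hc₀d : c₀ * d < ε / 2 := by
      rw [hc₀]
      rw [div_mul_eq_mul_div, div_lt_iff₀ (by positivity)]
      have hd1 : (1:ℝ) ≤ (d:ℝ) := by exact_mod_cast hd0
      nlinarith [hε]
    have h7 : ε / 2 < ε * ((N:ℝ) * |s|) := by nlinarith [hNs_ge, hε]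
    have h8 : (N:ℝ) * g < (N:ℝ) * (ε * |s|) := by
      calc (N:ℝ) * g ≤ c₀ * d := hNg
        _ < ε / 2 := hc₀d
        _ < ε * ((N:ℝ) * |s|) := h7
        _ = (N:ℝ) * (ε * |s|) := by ring
    have hgfin : g < ε * |s| := lt_of_mul_lt_mul_left h8 hNpos.le
    rw [Real.dist_eq, sub_zero, abs_of_nonneg (by positivity)]
    rw [div_lt_iff₀ habs]
    exact hgfin
end

section
/- Let H be a complex Hilbert space, U : ℝ → B(H) a strongly continuous one-parameter unitary group, P a finite-rank orthogonal projection on H, and H_Z a bounded self-adjoint operator with H_Z = P H_Z P. Define V(s) = P U(s) P and V_N(t) = (V(t/N))^N. Then the following are equivalent: (a) ‖(V(s) − P)/s + iH_Z‖ → 0 as s → 0 (i.e. s ↦ V(s) is differentiable at s = 0 in operator norm with derivative −iH_Z); (b) for every T > 0, sup_{|t|≤T} ‖V_N(t) − P·exp(−itH_Z)‖ → 0 as N → +∞. -/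
open ContinuousLinearMap Filter Topology Finset

open ContinuousLinearMap Filter Topology Finset

section aux
variable {A : Type*} [NormedRing A] [NormedAlgebra ℂ A] [CompleteSpace A]

lemma pow_sub_pow_id (a b : A) : ∀ k : ℕ,
    a ^ k - b ^ k = ∑ j ∈ range k, b ^ j * (a - b) * a ^ (k - 1 - j) := by
  intro k
  induction k with
  | zero => simp
  | succ k ih =>
    have key : a ^ (k + 1) - b ^ (k + 1) = b * (a ^ k - b ^ k) + (a - b) * a ^ k := by
      rw [mul_sub, sub_mul, ← pow_succ', ← pow_succ']
      abel
    rw [key, ih, Finset.mul_sum]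
    rw [Finset.sum_range_succ' (fun j => b ^ j * (a - b) * a ^ (k + 1 - 1 - j)) k]
    congr 1
    · apply Finset.sum_congr rfl
      intro j hj
      rw [← mul_assoc, ← mul_assoc, ← pow_succ']
      congr 2
      omega
    · simp

set_option maxHeartbeats 1000000 in
lemma exp_tail (x : A) (k : ℕ) (hk : 1 ≤ k) :
    ‖NormedSpace.exp x - ∑ i ∈ range k, ((Nat.factorial i : ℂ))⁻¹ • x ^ i‖ ≤ ‖x‖ ^ k * Real.exp ‖x‖ := by
  have hsum : Summable (fun n => ((Nat.factorial n : ℂ))⁻¹ • x ^ n) := NormedSpace.expSeries_summable' x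
  have hnorm : Summable (fun n => ‖((Nat.factorial n : ℂ))⁻¹ • x ^ n‖) := NormedSpace.norm_expSeries_summable' x
  have h1 : NormedSpace.exp x = (∑ i ∈ range k, ((Nat.factorial i : ℂ))⁻¹ • x ^ i)
      + ∑' n, ((Nat.factorial (n + k) : ℂ))⁻¹ • x ^ (n + k) := by
    rw [NormedSpace.exp_eq_tsum ℂ]
    exact (Summable.sum_add_tsum_nat_add k hsum).symm
  rw [h1]
  have h2 : ∀ n : ℕ, ‖((Nat.factorial (n + k) : ℂ))⁻¹ • x ^ (n + k)‖ ≤ (‖x‖ ^ n / (Nat.factorial n)) * ‖x‖ ^ k := by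
    intro n
    rw [norm_smul, norm_inv]
    have hxp : ‖x ^ (n + k)‖ ≤ ‖x‖ ^ (n + k) := norm_pow_le' x (by omega)
    have hfact : ((Nat.factorial n) : ℝ) ≤ ((Nat.factorial (n+k)) : ℝ) := by
      exact_mod_cast Nat.factorial_le (by omega : n ≤ n + k)
    have h0 : (0:ℝ) < (Nat.factorial n) := by positivity
    have hnc : ‖((Nat.factorial (n+k)) : ℂ)‖ = ((Nat.factorial (n+k)) : ℝ) := by simp
    rw [hnc]
    calc ((Nat.factorial (n+k)) : ℝ)⁻¹ * ‖x ^ (n + k)‖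
        ≤ ((Nat.factorial n) : ℝ)⁻¹ * ‖x‖ ^ (n + k) := by gcongr
      _ = (‖x‖ ^ n / (Nat.factorial n)) * ‖x‖ ^ k := by rw [pow_add]; ring
  have hsum2 : Summable (fun n => (‖x‖ ^ n / (Nat.factorial n)) * ‖x‖ ^ k) :=
    (Real.summable_pow_div_factorial ‖x‖).mul_right _
  calc ‖(∑ i ∈ range k, ((Nat.factorial i : ℂ))⁻¹ • x ^ i) + (∑' n, ((Nat.factorial (n + k) : ℂ))⁻¹ • x ^ (n + k))
        - ∑ i ∈ range k, ((Nat.factorial i : ℂ))⁻¹ • x ^ i‖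
      = ‖∑' n, ((Nat.factorial (n + k) : ℂ))⁻¹ • x ^ (n + k)‖ := by rw [add_sub_cancel_left]
    _ ≤ ∑' n, ‖((Nat.factorial (n + k) : ℂ))⁻¹ • x ^ (n + k)‖ :=
        norm_tsum_le_tsum_norm ((summable_nat_add_iff k).2 hnorm)
    _ ≤ ∑' n, (‖x‖ ^ n / (Nat.factorial n)) * ‖x‖ ^ k :=
        Summable.tsum_le_tsum h2 ((summable_nat_add_iff k).2 hnorm) hsum2
    _ = (∑' n, ‖x‖ ^ n / (Nat.factorial n)) * ‖x‖ ^ k := by rw [tsum_mul_right]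
    _ = Real.exp ‖x‖ * ‖x‖ ^ k := by
        have : Real.exp ‖x‖ = ∑' n, ‖x‖ ^ n / (Nat.factorial n) := by
          rw [Real.exp_eq_exp_ℝ, NormedSpace.exp_eq_tsum_div]
        rw [this]
    _ = ‖x‖ ^ k * Real.exp ‖x‖ := mul_comm _ _

lemma exp_tail1 (x : A) : ‖NormedSpace.exp x - 1‖ ≤ ‖x‖ * Real.exp ‖x‖ := by
  have := exp_tail x 1 le_rfl
  simpa using this

lemma exp_tail2 (x : A) : ‖NormedSpace.exp x - 1 - x‖ ≤ ‖x‖ ^ 2 * Real.exp ‖x‖ := by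
  have := exp_tail x 2 one_le_two
  have hs : ∑ i ∈ range 2, ((Nat.factorial i : ℂ))⁻¹ • x ^ i = 1 + x := by
    simp [Finset.sum_range_succ]
  rw [hs] at this
  simpa [sub_sub] using this

lemma pow_norm_le_one {a : A} (ha : ‖a‖ ≤ 1) (h1 : ‖(1:A)‖ ≤ 1) : ∀ n : ℕ, ‖a ^ n‖ ≤ 1 := by
  intro n
  induction n with
  | zero => simpa using h1
  | succ n ih => calc ‖a ^ (n+1)‖ = ‖a ^ n * a‖ := by rw [pow_succ]
      _ ≤ ‖a ^ n‖ * ‖a‖ := norm_mul_le _ _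
      _ ≤ 1 * 1 := mul_le_mul ih ha (norm_nonneg _) (by linarith [norm_nonneg (a ^ n)])
      _ = 1 := one_mul 1

lemma pow_sub_pow_norm_le {a b : A} (ha : ‖a‖ ≤ 1) (hb : ‖b‖ ≤ 1) (h1 : ‖(1:A)‖ ≤ 1) :
    ∀ n : ℕ, ‖a ^ n - b ^ n‖ ≤ n * ‖a - b‖ := by
  intro n
  induction n with
  | zero => simp
  | succ n ih =>
    have key : a ^ (n+1) - b ^ (n+1) = a ^ n * (a - b) + (a ^ n - b ^ n) * b := by
      rw [pow_succ, pow_succ]; noncomm_ring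
    have hA := pow_norm_le_one ha h1 n
    have t1 : ‖a ^ n * (a - b)‖ ≤ ‖a - b‖ := by
      calc ‖a ^ n * (a - b)‖ ≤ ‖a ^ n‖ * ‖a - b‖ := norm_mul_le _ _
        _ ≤ 1 * ‖a - b‖ := mul_le_mul_of_nonneg_right hA (norm_nonneg _)
        _ = ‖a - b‖ := one_mul _
    have t2 : ‖(a ^ n - b ^ n) * b‖ ≤ n * ‖a - b‖ := by
      calc ‖(a ^ n - b ^ n) * b‖ ≤ ‖a ^ n - b ^ n‖ * ‖b‖ := norm_mul_le _ _
        _ ≤ (n * ‖a - b‖) * 1 := mul_le_mul ih hb (norm_nonneg _) (by positivity)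
        _ = n * ‖a - b‖ := mul_one _
    rw [key]
    calc ‖a ^ n * (a - b) + (a ^ n - b ^ n) * b‖
        ≤ ‖a ^ n * (a - b)‖ + ‖(a ^ n - b ^ n) * b‖ := norm_add_le _ _
      _ ≤ ‖a - b‖ + n * ‖a - b‖ := add_le_add t1 t2
      _ = ((n + 1 : ℕ) : ℝ) * ‖a - b‖ := by push_cast; ring

omit [NormedAlgebra ℂ A] [CompleteSpace A] in
lemma P_absorb (Pp Wx X : A) (hPW : Pp * Wx = Wx) (hPX : Pp * X = X) :
    ∀ j : ℕ, Pp * (Wx ^ j * X) = Wx ^ j * X := by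
  intro j
  induction j with
  | zero => simpa using hPX
  | succ j _ =>
    calc Pp * (Wx ^ (j + 1) * X) = Pp * Wx * (Wx ^ j * X) := by rw [pow_succ', mul_assoc, mul_assoc]
      _ = Wx ^ (j + 1) * X := by rw [hPW, ← mul_assoc, ← pow_succ']

omit [NormedAlgebra ℂ A] [CompleteSpace A] in
lemma R_absorb (R Wx X Pp : A) (hRW : R * Wx = Pp) (hPW : Pp * Wx = Wx) (hPX : Pp * X = X) :
    ∀ j i : ℕ, R ^ (i + j) * (Wx ^ j * X) = R ^ i * X := by
  intro j
  induction j with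
  | zero => intro i; simp
  | succ j ih =>
    intro i
    have h1 : R ^ (i + (j + 1)) = R ^ (i + j) * R := by
      rw [show i + (j + 1) = (i + j) + 1 by omega, pow_succ]
    rw [h1, pow_succ', mul_assoc Wx, mul_assoc (R ^ (i + j)), ← mul_assoc R Wx, hRW,
      P_absorb Pp Wx X hPW hPX j]
    exact ih i

end aux

section hilb
variable {H : Type*} [NormedAddCommGroup H] [InnerProductSpace ℂ H] [CompleteSpace H]

lemma isom_of_adj (A : H →L[ℂ] H) (h : adjoint A * A = 1) : ∀ x, ‖A x‖ = ‖x‖ := by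
  intro x
  have h1 : (inner ℂ (A x) (A x) : ℂ) = inner ℂ x x := by
    rw [← ContinuousLinearMap.adjoint_inner_right]
    have : adjoint A (A x) = x := by
      have := congrArg (fun (B : H →L[ℂ] H) => B x) h
      simpa [ContinuousLinearMap.mul_apply] using this
    rw [this]
  have h2 : ‖A x‖ ^ 2 = ‖x‖ ^ 2 := by
    have e1 := inner_self_eq_norm_sq (𝕜 := ℂ) (A x)
    have e2 := inner_self_eq_norm_sq (𝕜 := ℂ) x
    rw [← e1, ← e2, h1]
  nlinarith [norm_nonneg (A x), norm_nonneg x]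

lemma norm_le_one_of_adj (A : H →L[ℂ] H) (h : adjoint A * A = 1) : ‖A‖ ≤ 1 :=
  ContinuousLinearMap.opNorm_le_bound A zero_le_one (fun x => by rw [isom_of_adj A h x, one_mul])

lemma proj_norm_le_one (P : H →L[ℂ] H) (hPsa : adjoint P = P) (hPidem : P * P = P) : ‖P‖ ≤ 1 := by
  apply ContinuousLinearMap.opNorm_le_bound P zero_le_one
  intro x
  rw [one_mul]
  rcases eq_or_lt_of_le (norm_nonneg (P x)) with h0 | h0
  · rw [← h0]; exact norm_nonneg x
  · have h1 : (inner ℂ (P x) (P x) : ℂ) = inner ℂ x (P x) := by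
      nth_rewrite 1 [← hPsa]
      rw [ContinuousLinearMap.adjoint_inner_left]
      congr 1
      have := congrArg (fun (B : H →L[ℂ] H) => B x) hPidem
      simpa [ContinuousLinearMap.mul_apply] using this
    have h2 : ‖P x‖ ^ 2 = RCLike.re (inner ℂ x (P x) : ℂ) := by
      rw [← h1, inner_self_eq_norm_sq (𝕜 := ℂ)]
    have h3 : RCLike.re (inner ℂ x (P x) : ℂ) ≤ ‖x‖ * ‖P x‖ := by
      calc RCLike.re (inner ℂ x (P x) : ℂ) ≤ |RCLike.re (inner ℂ x (P x) : ℂ)| := le_abs_self _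
        _ ≤ ‖(inner ℂ x (P x) : ℂ)‖ := RCLike.abs_re_le_norm _
        _ ≤ ‖x‖ * ‖P x‖ := norm_inner_le_norm _ _
    nlinarith
end hilb

namespace Stmt18Aux

variable {H : Type*} [NormedAddCommGroup H] [InnerProductSpace ℂ H] [CompleteSpace H]

noncomputable def Efun (H_Z : H →L[ℂ] H) (t : ℝ) : H →L[ℂ] H :=
  NormedSpace.exp ((-(Complex.I * (t : ℂ))) • H_Z)

variable (H_Z P : H →L[ℂ] H)

lemma norm_coef (t : ℝ) : ‖(-(Complex.I * (t : ℂ))) • H_Z‖ = |t| * ‖H_Z‖ := by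
  rw [norm_smul]
  simp

lemma Efun_add (a b : ℝ) : Efun H_Z (a + b) = Efun H_Z a * Efun H_Z b := by
  unfold Efun
  rw [show (-(Complex.I * ((a + b : ℝ) : ℂ))) • H_Z
      = (-(Complex.I * (a : ℂ))) • H_Z + (-(Complex.I * (b : ℂ))) • H_Z by
    rw [← add_smul]; congr 1; push_cast; ring]
  exact NormedSpace.exp_add_of_commute_of_mem_ball (𝕂 := ℂ) (((Commute.refl H_Z).smul_left _).smul_right _)
    ((NormedSpace.expSeries_radius_eq_top ℂ (H →L[ℂ] H)).symm ▸ edist_lt_top _ _)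
    ((NormedSpace.expSeries_radius_eq_top ℂ (H →L[ℂ] H)).symm ▸ edist_lt_top _ _)

lemma Efun_zero : Efun H_Z 0 = 1 := by
  unfold Efun
  simp [NormedSpace.exp_zero]

lemma Efun_mul_neg (t : ℝ) : Efun H_Z t * Efun H_Z (-t) = 1 := by
  rw [← Efun_add, add_neg_cancel, Efun_zero]

lemma Efun_adjoint (hHsa : IsSelfAdjoint H_Z) (t : ℝ) :
    adjoint (Efun H_Z t) = Efun H_Z (-t) := by
  unfold Efun
  rw [← ContinuousLinearMap.star_eq_adjoint, NormedSpace.star_exp]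
  congr 1
  rw [star_smul, hHsa.star_eq]
  congr 1
  simp [map_mul, Complex.conj_I, Complex.conj_ofReal]

lemma Efun_norm_le (hHsa : IsSelfAdjoint H_Z) (t : ℝ) : ‖Efun H_Z t‖ ≤ 1 := by
  apply norm_le_one_of_adj
  rw [Efun_adjoint H_Z hHsa, ← Efun_add, neg_add_cancel, Efun_zero]

lemma Efun_comm_P (h : Commute P H_Z) (t : ℝ) : Commute P (Efun H_Z t) :=
  Commute.exp_right (h.smul_right _)

lemma Efun_sub_one_le (t : ℝ) :
    ‖Efun H_Z t - 1‖ ≤ |t| * ‖H_Z‖ * Real.exp (|t| * ‖H_Z‖) := by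
  have h := exp_tail1 ((-(Complex.I * (t : ℂ))) • H_Z)
  rw [norm_coef] at h
  exact h

lemma Efun_taylor2 (t : ℝ) :
    ‖Efun H_Z t - 1 - (-(Complex.I * (t : ℂ))) • H_Z‖
      ≤ (|t| * ‖H_Z‖) ^ 2 * Real.exp (|t| * ‖H_Z‖) := by
  have h := exp_tail2 ((-(Complex.I * (t : ℂ))) • H_Z)
  rw [norm_coef] at h
  exact h

noncomputable def Wfun (P H_Z : H →L[ℂ] H) (t : ℝ) : H →L[ℂ] H := P * Efun H_Z t

lemma Wfun_add (hPidem : P * P = P) (hcomm : Commute P H_Z) (a b : ℝ) :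
    Wfun P H_Z a * Wfun P H_Z b = Wfun P H_Z (a + b) := by
  unfold Wfun
  rw [(Efun_comm_P H_Z P hcomm a).symm.mul_mul_mul_comm P (Efun H_Z b), hPidem, Efun_add]

lemma Wfun_zero : Wfun P H_Z 0 = P := by
  unfold Wfun; rw [Efun_zero, mul_one]

lemma P_mul_Wfun (hPidem : P * P = P) (t : ℝ) : P * Wfun P H_Z t = Wfun P H_Z t := by
  unfold Wfun; rw [← mul_assoc, hPidem]

lemma Wfun_mul_P (hPidem : P * P = P) (hcomm : Commute P H_Z) (t : ℝ) :
    Wfun P H_Z t * P = Wfun P H_Z t := by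
  unfold Wfun
  rw [mul_assoc, ← (Efun_comm_P H_Z P hcomm t).eq, ← mul_assoc, hPidem]

lemma Wfun_norm_le (hPsa : adjoint P = P) (hPidem : P * P = P) (hHsa : IsSelfAdjoint H_Z)
    (t : ℝ) : ‖Wfun P H_Z t‖ ≤ 1 := by
  unfold Wfun
  calc ‖P * Efun H_Z t‖ ≤ ‖P‖ * ‖Efun H_Z t‖ := norm_mul_le _ _
    _ ≤ 1 * 1 := mul_le_mul (proj_norm_le_one P hPsa hPidem) (Efun_norm_le H_Z hHsa t)
        (norm_nonneg _) zero_le_one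
    _ = 1 := one_mul 1

lemma Wfun_pow (hPidem : P * P = P) (hcomm : Commute P H_Z) (t : ℝ) :
    ∀ n : ℕ, 1 ≤ n → Wfun P H_Z t ^ n = Wfun P H_Z (n * t) := by
  intro n
  induction n with
  | zero => omega
  | succ n ih =>
    intro _
    rcases Nat.eq_or_lt_of_le (Nat.one_le_iff_ne_zero.mpr (by omega : n + 1 ≠ 0)) with h | h
    · simp [← h]
    · have hn : 1 ≤ n := by omega
      rw [pow_succ, ih hn, Wfun_add H_Z P hPidem hcomm]
      congr 1
      push_cast
      ring

end Stmt18Aux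

set_option maxHeartbeats 8000000 in
set_option synthInstance.maxHeartbeats 400000 in
open Stmt18Aux in
theorem stmt_18 {H : Type*} [NormedAddCommGroup H] [InnerProductSpace ℂ H] [CompleteSpace H]
    (U : ℝ → H →L[ℂ] H) (hU0 : U 0 = 1) (hUadd : ∀ t s : ℝ, U (t + s) = U t * U s)
    (hUunitary : ∀ t : ℝ, adjoint (U t) * U t = 1 ∧ U t * adjoint (U t) = 1)
    (hUcont : ∀ x : H, Continuous fun t : ℝ => U t x)
    (P : H →L[ℂ] H) (hPsa : adjoint P = P) (hPidem : P * P = P)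
    (hPfin : FiniteDimensional ℂ (LinearMap.range (P : H →ₗ[ℂ] H)))
    (H_Z : H →L[ℂ] H) (hHsa : IsSelfAdjoint H_Z) (hHP : H_Z = P * H_Z * P)
    (V : ℝ → H →L[ℂ] H) (hV : ∀ s : ℝ, V s = P * U s * P) :
    Tendsto (fun s : ℝ => ‖s⁻¹ • (V s - P) + Complex.I • H_Z‖) (𝓝[≠] 0) (𝓝 0) ↔
      ∀ T > (0 : ℝ),
        TendstoUniformlyOn (fun (N : ℕ) (t : ℝ) => V (t / N) ^ N)
          (fun t : ℝ => P * NormedSpace.exp ((-(Complex.I * t)) • H_Z))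
          atTop (Set.Icc (-T) T) := by
  classical
  set E : ℝ → H →L[ℂ] H := Efun H_Z with hEdef
  set W : ℝ → H →L[ℂ] H := Wfun P H_Z with hWdef
  have hfW : ∀ t : ℝ, P * NormedSpace.exp ((-(Complex.I * t)) • H_Z) = W t := fun _ => rfl
  have hPH : P * H_Z = H_Z := by
    conv_lhs => rw [hHP]
    conv_rhs => rw [hHP]
    rw [← mul_assoc, ← mul_assoc, hPidem]
  have hHPr : H_Z * P = H_Z := by
    conv_lhs => rw [hHP]
    conv_rhs => rw [hHP]
    rw [mul_assoc, mul_assoc, hPidem]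
    exact (mul_assoc _ _ _).symm
  have hcomm : Commute P H_Z := by
    show P * H_Z = H_Z * P
    rw [hPH, hHPr]
  have hPnorm : ‖P‖ ≤ 1 := proj_norm_le_one P hPsa hPidem
  have hUnorm : ∀ t, ‖U t‖ ≤ 1 := fun t => norm_le_one_of_adj _ (hUunitary t).1
  have hVnorm : ∀ s, ‖V s‖ ≤ 1 := by
    intro s
    rw [hV s]
    calc ‖P * U s * P‖ ≤ ‖P * U s‖ * ‖P‖ := norm_mul_le _ _
      _ ≤ (‖P‖ * ‖U s‖) * ‖P‖ :=
          mul_le_mul_of_nonneg_right (norm_mul_le P (U s)) (norm_nonneg P)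
      _ ≤ 1 := by
          nlinarith [hUnorm s, hPnorm, norm_nonneg P, norm_nonneg (U s),
            mul_nonneg (norm_nonneg P) (norm_nonneg (U s))]
  have hone : ‖(1 : H →L[ℂ] H)‖ ≤ 1 := by
    rw [ContinuousLinearMap.one_def]
    exact ContinuousLinearMap.norm_id_le
  have hWnorm : ∀ t, ‖W t‖ ≤ 1 := fun t => Wfun_norm_le H_Z P hPsa hPidem hHsa t
  have hPV : ∀ s, P * V s = V s := by
    intro s
    rw [hV s, ← mul_assoc, ← mul_assoc, hPidem]
  have hVP : ∀ s, V s * P = V s := by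
    intro s
    rw [hV s, mul_assoc, hPidem]
  have hV0 : V 0 = P := by rw [hV 0, hU0, mul_one, hPidem]
  have hPidpow : ∀ n : ℕ, 1 ≤ n → P ^ n = P := by
    intro n
    induction n with
    | zero => omega
    | succ n ih =>
      intro _
      rcases Nat.eq_or_lt_of_le (Nat.one_le_iff_ne_zero.mpr (by omega : n + 1 ≠ 0)) with h | h
      · rw [← h, pow_one]
      · rw [pow_succ, ih (by omega), hPidem]
  -- Taylor bound for W near 0
  have hWsmall : ∀ s : ℝ, s ≠ 0 →
      ‖s⁻¹ • (W s - P) + Complex.I • H_Z‖ ≤ |s| * ‖H_Z‖ ^ 2 * Real.exp (|s| * ‖H_Z‖) := by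
    intro s hs
    have habs : |s| ≠ 0 := by simpa using hs
    have hkey : s⁻¹ • (W s - P) + Complex.I • H_Z
        = s⁻¹ • (P * (E s - 1 - (-(Complex.I * (s : ℂ))) • H_Z)) := by
      have h1 : P * (E s - 1 - (-(Complex.I * (s : ℂ))) • H_Z)
          = W s - P - (-(Complex.I * (s : ℂ))) • H_Z := by
        rw [mul_sub, mul_sub, mul_one, mul_smul_comm, hPH]
        rfl
      have h2 : (s⁻¹ : ℝ) • ((-(Complex.I * (s : ℂ))) • H_Z) = -(Complex.I • H_Z) := by
        rw [← smul_assoc]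
        have h3 : (s⁻¹ : ℝ) • (-(Complex.I * (s : ℂ))) = -Complex.I := by
          rw [Complex.real_smul]
          have : (s : ℂ) ≠ 0 := by exact_mod_cast hs
          push_cast
          field_simp
        rw [h3, neg_smul]
      rw [h1, smul_sub s⁻¹ (W s - P) ((-(Complex.I * (s : ℂ))) • H_Z), h2, sub_neg_eq_add]
    rw [hkey, norm_smul]
    have ht := Efun_taylor2 H_Z s
    have hPle : ‖P * (E s - 1 - (-(Complex.I * (s : ℂ))) • H_Z)‖
        ≤ (|s| * ‖H_Z‖) ^ 2 * Real.exp (|s| * ‖H_Z‖) := by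
      calc ‖P * (E s - 1 - (-(Complex.I * (s : ℂ))) • H_Z)‖
          ≤ ‖P‖ * ‖E s - 1 - (-(Complex.I * (s : ℂ))) • H_Z‖ := norm_mul_le _ _
        _ ≤ (|s| * ‖H_Z‖) ^ 2 * Real.exp (|s| * ‖H_Z‖) := by
            nlinarith [norm_nonneg (E s - 1 - (-(Complex.I * (s : ℂ))) • H_Z), norm_nonneg P,
              Real.exp_pos (|s| * ‖H_Z‖)]
    have hnorminv : ‖(s⁻¹ : ℝ)‖ = |s|⁻¹ := by rw [Real.norm_eq_abs, abs_inv]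
    rw [hnorminv]
    have habspos : 0 < |s| := abs_pos.mpr hs
    calc |s|⁻¹ * ‖P * (E s - 1 - (-(Complex.I * (s : ℂ))) • H_Z)‖
        ≤ |s|⁻¹ * ((|s| * ‖H_Z‖) ^ 2 * Real.exp (|s| * ‖H_Z‖)) := by
          apply mul_le_mul_of_nonneg_left hPle (by positivity)
      _ = |s| * ‖H_Z‖ ^ 2 * Real.exp (|s| * ‖H_Z‖) := by
          field_simp
  -- difference bound between V and W
  have hVW : ∀ s : ℝ, s ≠ 0 → ‖V s - W s‖ ≤
      |s| * ‖s⁻¹ • (V s - P) + Complex.I • H_Z‖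
        + |s| * (|s| * ‖H_Z‖ ^ 2 * Real.exp (|s| * ‖H_Z‖)) := by
    intro s hs
    have hid : V s - W s = s • (s⁻¹ • (V s - P) + Complex.I • H_Z)
        - s • (s⁻¹ • (W s - P) + Complex.I • H_Z) := by
      rw [smul_add, smul_add, smul_smul, smul_smul, mul_inv_cancel₀ hs, one_smul, one_smul]
      abel
    rw [hid]
    calc ‖s • (s⁻¹ • (V s - P) + Complex.I • H_Z) - s • (s⁻¹ • (W s - P) + Complex.I • H_Z)‖
        ≤ ‖s • (s⁻¹ • (V s - P) + Complex.I • H_Z)‖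
          + ‖s • (s⁻¹ • (W s - P) + Complex.I • H_Z)‖ := norm_sub_le _ _
      _ ≤ |s| * ‖s⁻¹ • (V s - P) + Complex.I • H_Z‖
          + |s| * (|s| * ‖H_Z‖ ^ 2 * Real.exp (|s| * ‖H_Z‖)) := by
          rw [norm_smul, norm_smul, Real.norm_eq_abs]
          have := hWsmall s hs
          have := abs_nonneg s
          nlinarith
  constructor
  · -- forward direction
    intro hA T hT
    rw [Metric.tendstoUniformlyOn_iff]
    intro ε hε
    obtain ⟨δ, hδpos, hδ⟩ := Metric.tendsto_nhdsWithin_nhds.mp hA (ε / (2 * (T + 1)))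
      (by positivity)
    set C : ℝ := ‖H_Z‖ ^ 2 * Real.exp (T * ‖H_Z‖) + 1 with hC
    have hCpos : 0 < C := by positivity
    obtain ⟨N₁, hN₁⟩ := exists_nat_gt (max (T / δ) (2 * T ^ 2 * C / ε))
    rw [eventually_atTop]
    refine ⟨N₁ + 1, ?_⟩
    intro N hN t ht
    have hN1 : 1 ≤ N := by omega
    have hNpos : (0 : ℝ) < N := by exact_mod_cast (by omega : 0 < N)
    rw [hfW t, dist_eq_norm]
    by_cases htz : t = 0
    · subst htz
      have : V (0 / (N : ℝ)) = P := by rw [zero_div, hV0]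
      rw [this, hPidpow N hN1, hWdef, Wfun_zero, sub_self, norm_zero]
      exact hε
    · set s : ℝ := t / N with hsdef
      have hsne : s ≠ 0 := div_ne_zero htz (ne_of_gt hNpos)
      have hts : (N : ℝ) * s = t := by
        rw [hsdef, mul_div_cancel₀]
        exact ne_of_gt hNpos
      have hWt : W t = W s ^ N := by
        rw [hWdef, Wfun_pow H_Z P hPidem hcomm s N hN1, hts]
      rw [hWt]
      have hpow := pow_sub_pow_norm_le (hWnorm s) (hVnorm s) hone N
      have habsle : |s| ≤ T / N := by
        rw [hsdef, abs_div, Nat.abs_cast]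
        gcongr
        exact abs_le.mpr ⟨ht.1, ht.2⟩
      have habsT : |s| ≤ T := habsle.trans (div_le_self hT.le (by exact_mod_cast hN1))
      have hN₁N : (N₁ : ℝ) ≤ N := by exact_mod_cast (by omega : N₁ ≤ N)
      have hδs : |s| < δ := by
        have h1 : T / δ < N := lt_of_le_of_lt (le_max_left _ _) (hN₁.trans_le hN₁N)
        have h2 : T / N < δ := by
          rw [div_lt_iff₀ hNpos]
          rw [div_lt_iff₀ hδpos] at h1
          linarith
        exact lt_of_le_of_lt habsle h2
      have hgs := hδ (show s ∈ {x : ℝ | x ≠ 0} from hsne)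
        (show dist s 0 < δ by rw [Real.dist_eq, sub_zero]; exact hδs)
      rw [Real.dist_eq, sub_zero, abs_norm] at hgs
      set g : ℝ := ‖s⁻¹ • (V s - P) + Complex.I • H_Z‖ with hgdef
      have hg0 : 0 ≤ g := norm_nonneg _
      set X : ℝ := |s| * ‖H_Z‖ ^ 2 * Real.exp (|s| * ‖H_Z‖) with hX
      have hX0 : 0 ≤ X := by positivity
      have e1 : (N : ℝ) * |s| ≤ T := by
        rw [le_div_iff₀ hNpos] at habsle
        linarith
      have e3 : ‖H_Z‖ ^ 2 * Real.exp (|s| * ‖H_Z‖) ≤ C := by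
        rw [hC]
        have : Real.exp (|s| * ‖H_Z‖) ≤ Real.exp (T * ‖H_Z‖) :=
          Real.exp_le_exp.mpr (by nlinarith [norm_nonneg H_Z])
        nlinarith [sq_nonneg ‖H_Z‖]
      have e4 : X ≤ (T / N) * C := by
        rw [hX, mul_assoc]
        exact mul_le_mul habsle e3 (by positivity) (by positivity)
      have e5 : T * ((T / N) * C) < ε / 2 := by
        have h1 : 2 * T ^ 2 * C / ε < N := lt_of_le_of_lt (le_max_right _ _) (hN₁.trans_le hN₁N)
        rw [div_lt_iff₀ hε] at h1
        have h2 : T * ((T / N) * C) = T ^ 2 * C / N := by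
          field_simp
        rw [h2, div_lt_iff₀ hNpos]
        nlinarith
      have e6 : T * g < ε / 2 := by
        have := mul_lt_mul_of_pos_left hgs hT
        have hT1 : T / (T + 1) < 1 := by
          rw [div_lt_one (by linarith)]
          linarith
        calc T * g < T * (ε / (2 * (T + 1))) := mul_lt_mul_of_pos_left hgs hT
          _ ≤ ε / 2 := by
              rw [← mul_div_assoc]
              rw [div_le_div_iff₀ (by positivity) (by norm_num : (0:ℝ) < 2)]
              nlinarith
      calc ‖W s ^ N - V s ^ N‖ ≤ N * ‖W s - V s‖ := hpow
        _ = N * ‖V s - W s‖ := by rw [norm_sub_rev]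
        _ ≤ N * (|s| * g + |s| * X) := by
            apply mul_le_mul_of_nonneg_left _ hNpos.le
            exact hVW s hsne
        _ = (N * |s|) * g + (N * |s|) * X := by ring
        _ ≤ T * g + T * ((T / N) * C) := by
            have := mul_le_mul_of_nonneg_right e1 hg0
            have h2 : (N * |s|) * X ≤ T * ((T / N) * C) := by
              calc (N * |s|) * X ≤ T * X := mul_le_mul_of_nonneg_right e1 hX0
                _ ≤ T * ((T / N) * C) := mul_le_mul_of_nonneg_left e4 hT.le
            linarith
        _ < ε / 2 + ε / 2 := by linarith
        _ = ε := by ring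
  · -- converse direction
    intro hB
    rw [Metric.tendsto_nhdsWithin_nhds]
    intro ε hε
    set η : ℝ := min (1/4) (ε / (256 * (‖H_Z‖ + 1))) with hηdef
    have hηpos : 0 < η := lt_min (by norm_num) (by positivity)
    have hη14 : η ≤ 1/4 := min_le_left _ _
    have hηε : η ≤ ε / (256 * (‖H_Z‖ + 1)) := min_le_right _ _
    have hB1 := hB 1 one_pos
    rw [Metric.tendstoUniformlyOn_iff] at hB1
    obtain ⟨N₀', hN₀'⟩ := (hB1 η hηpos).exists_forall_of_atTop
    set N₀ : ℕ := max N₀' 1 with hN₀def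
    have hN₀1 : 1 ≤ N₀ := le_max_right _ _
    have hN₀ : ∀ N, N₀ ≤ N → ∀ t ∈ Set.Icc (-1:ℝ) 1, dist (W t) (V (t / N) ^ N) < η := by
      intro N hN t ht
      have h1 := hN₀' N (le_trans (le_max_left _ _) hN) t ht
      rwa [hfW t] at h1
    set K₀ : ℕ := N₀ + 16 * N₀ * N₀ + 2 with hK₀def
    set δ : ℝ := min (1 / (16 * ((K₀:ℝ) + 1) * (‖H_Z‖ + 1)))
      (min (ε / (6 * (‖H_Z‖ ^ 2 + 1))) (1 / (‖H_Z‖ + 1))) with hδdef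
    have hδpos : 0 < δ :=
      lt_min (by positivity) (lt_min (by positivity) (by positivity))
    refine ⟨δ, hδpos, ?_⟩
    intro s hs hd
    have hsne : s ≠ 0 := hs
    have habs : 0 < |s| := abs_pos.mpr hsne
    rw [Real.dist_eq, sub_zero] at hd
    rw [Real.dist_eq, sub_zero, abs_norm]
    set x : ℝ := 1 / (16 * |s| * (‖H_Z‖ + 1)) with hxdef
    have hxpos : 0 < x := by positivity
    set k : ℕ := ⌊x⌋₊ with hkdef
    have hkle : (k : ℝ) ≤ x := Nat.floor_le hxpos.le
    have hxK : (K₀ : ℝ) + 1 ≤ x := by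
      have h1 : |s| < 1 / (16 * ((K₀:ℝ) + 1) * (‖H_Z‖ + 1)) :=
        lt_of_lt_of_le hd (min_le_left _ _)
      rw [hxdef, le_div_iff₀ (by positivity)]
      rw [lt_div_iff₀ (by positivity)] at h1
      nlinarith [norm_nonneg H_Z]
    have hkK : K₀ + 1 ≤ k := Nat.le_floor (by exact_mod_cast hxK)
    have hkN₀ : N₀ ≤ k := by omega
    have hk1 : 1 ≤ k := by omega
    have hk16 : 16 * N₀ * N₀ ≤ k := by omega
    have hk2 : 2 ≤ k := by omega
    have hkpos : (0:ℝ) < k := by exact_mod_cast hk1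
    have hksmall : (k:ℝ) * |s| * (‖H_Z‖ + 1) ≤ 1/16 := by
      rw [hxdef, le_div_iff₀ (by positivity)] at hkle
      nlinarith
    have hklow : 1 / (32 * |s| * (‖H_Z‖ + 1)) ≤ (k:ℝ) := by
      have hx2 : (2:ℝ) ≤ x := by
        have h1 : (1:ℝ) ≤ (K₀:ℝ) := by exact_mod_cast (by omega : 1 ≤ K₀)
        linarith [hxK]
      have hfl : x < k + 1 := Nat.lt_floor_add_one x
      rw [div_le_iff₀ (by positivity)]
      rw [hxdef] at hfl hx2
      rw [le_div_iff₀ (by positivity)] at hx2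
      rw [div_lt_iff₀ (by positivity)] at hfl
      nlinarith [habs.le, norm_nonneg H_Z,
        mul_nonneg (mul_nonneg hkpos.le (abs_nonneg s)) (norm_nonneg H_Z)]
    set Δ : H →L[ℂ] H := V s - W s with hΔdef
    have hΔ2 : ‖Δ‖ ≤ 2 := by
      calc ‖V s - W s‖ ≤ ‖V s‖ + ‖W s‖ := norm_sub_le _ _
        _ ≤ 2 := by linarith [hVnorm s, hWnorm s]
    have hksH : (k:ℝ) * |s| * ‖H_Z‖ ≤ 1/16 := by nlinarith [norm_nonneg H_Z, habs.le]
    have hks1 : (k:ℝ) * |s| ≤ 1 := by nlinarith [norm_nonneg H_Z, habs.le]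
    -- hypothesis at exponents i within [N₀, k]
    have hyp : ∀ i : ℕ, N₀ ≤ i → i ≤ k → ‖V s ^ i - W s ^ i‖ ≤ η := by
      intro i h1 h2
      have hi1 : 1 ≤ i := le_trans hN₀1 h1
      have hipos : (0:ℝ) < i := by exact_mod_cast hi1
      have hik : (i:ℝ) ≤ k := by exact_mod_cast h2
      have hmem : (i:ℝ) * s ∈ Set.Icc (-1:ℝ) 1 := by
        have habs1 : |(i:ℝ) * s| ≤ 1 := by
          rw [abs_mul, Nat.abs_cast]
          nlinarith [habs.le]
        exact ⟨(abs_le.mp habs1).1, (abs_le.mp habs1).2⟩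
      have hdist := hN₀ i h1 ((i:ℝ)*s) hmem
      rw [dist_eq_norm] at hdist
      have hdiv : ((i:ℝ) * s) / (i:ℝ) = s := by field_simp
      rw [hdiv] at hdist
      rw [hWdef, Wfun_pow H_Z P hPidem hcomm s i hi1, norm_sub_rev]
      exact le_of_lt hdist
    -- algebraic setup
    set R : H →L[ℂ] H := W (-s) with hRdef
    have hRW : R * W s = P := by
      rw [hRdef, hWdef, Wfun_add H_Z P hPidem hcomm, neg_add_cancel, Wfun_zero]
    have hPWs : P * W s = W s := P_mul_Wfun H_Z P hPidem s
    have hPΔ' : P * Δ = Δ := by rw [hΔdef, mul_sub, hPV s, P_mul_Wfun H_Z P hPidem s]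
    have hΔP : Δ * P = Δ := by rw [hΔdef, sub_mul, hVP s, Wfun_mul_P H_Z P hPidem hcomm s]
    have hPΔV : ∀ m : ℕ, P * (Δ * V s ^ m) = Δ * V s ^ m := by
      intro m
      rw [← mul_assoc, hPΔ']
    have hRnorm : ‖R‖ ≤ 1 := hWnorm (-s)
    have hRpow : ∀ m:ℕ, ‖R ^ m‖ ≤ 1 := pow_norm_le_one hRnorm hone
    have hVpow : ∀ m:ℕ, ‖V s ^ m‖ ≤ 1 := pow_norm_le_one (hVnorm s) hone
    have hWpow' : ∀ m:ℕ, ‖W s ^ m‖ ≤ 1 := pow_norm_le_one (hWnorm s) hone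
    -- the summation identity
    have hiden : R ^ (k-1) * (V s ^ k - W s ^ k) = ∑ i ∈ range k, R ^ i * (Δ * V s ^ i) := by
      rw [pow_sub_pow_id (V s) (W s) k, Finset.mul_sum]
      rw [← Finset.sum_range_reflect (fun i => R ^ i * (Δ * V s ^ i)) k]
      apply Finset.sum_congr rfl
      intro j hj
      have hjk : j < k := Finset.mem_range.mp hj
      have h2 := R_absorb R (W s) (Δ * V s ^ (k-1-j)) P hRW hPWs (hPΔV (k-1-j)) j (k-1-j)
      rw [show (k-1-j) + j = k-1 from by omega] at h2
      rw [← h2, hΔdef, mul_assoc]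
    -- rewriting the W-terms via E-conjugation
    have hterm_eq : ∀ i : ℕ, 1 ≤ i →
        R ^ i * (Δ * W s ^ i) = E (-((i:ℝ) * s)) * Δ * E ((i:ℝ) * s) := by
      intro i hi
      have hR : R ^ i = P * E (-((i:ℝ) * s)) := by
        rw [hRdef, hWdef, Wfun_pow H_Z P hPidem hcomm (-s) i hi,
          show (i:ℝ) * -s = -((i:ℝ)*s) by ring]
        rfl
      have hWs : W s ^ i = P * E ((i:ℝ) * s) := by
        rw [hWdef, Wfun_pow H_Z P hPidem hcomm s i hi]
        rfl
      have hPE : ∀ u : ℝ, P * E u = E u * P := fun u => (Efun_comm_P H_Z P hcomm u).eq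
      rw [hR, hWs, hPE (-((i:ℝ)*s)), ← mul_assoc Δ P, hΔP, mul_assoc (E (-((i:ℝ)*s))) P,
        ← mul_assoc P Δ, hPΔ', ← mul_assoc]
    -- bound on conjugated terms
    have hterm_bound : ∀ i ∈ range k, ‖R ^ i * (Δ * W s ^ i) - Δ‖
        ≤ 6 * ((k:ℝ) * |s| * ‖H_Z‖) * ‖Δ‖ := by
      intro i hi
      have hik : (i:ℝ) ≤ k := by
        have := Finset.mem_range.mp hi
        exact_mod_cast le_of_lt this
      rcases Nat.eq_zero_or_pos i with h0 | h1
      · subst h0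
        simp only [pow_zero, one_mul, mul_one]
        rw [sub_self, norm_zero]
        positivity
      · rw [hterm_eq i h1]
        have hisH : |((i:ℝ) * s)| * ‖H_Z‖ ≤ (k:ℝ) * |s| * ‖H_Z‖ := by
          rw [abs_mul, Nat.abs_cast]
          gcongr
        have hisH1 : |((i:ℝ) * s)| * ‖H_Z‖ ≤ 1 := by linarith [hksH]
        have hexp3 : Real.exp (|((i:ℝ) * s)| * ‖H_Z‖) ≤ 3 := by
          calc Real.exp (|((i:ℝ) * s)| * ‖H_Z‖) ≤ Real.exp 1 := Real.exp_le_exp.mpr hisH1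
            _ ≤ 3 := le_of_lt (lt_trans Real.exp_one_lt_d9 (by norm_num))
        have hEp : ‖E ((i:ℝ) * s) - 1‖ ≤ 3 * ((k:ℝ) * |s| * ‖H_Z‖) := by
          calc ‖E ((i:ℝ) * s) - 1‖
              ≤ |((i:ℝ) * s)| * ‖H_Z‖ * Real.exp (|((i:ℝ) * s)| * ‖H_Z‖) :=
                Efun_sub_one_le H_Z ((i:ℝ) * s)
            _ ≤ ((k:ℝ) * |s| * ‖H_Z‖) * 3 := mul_le_mul hisH hexp3
                (Real.exp_pos _).le (by positivity)
            _ = 3 * ((k:ℝ) * |s| * ‖H_Z‖) := mul_comm _ _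
        have hEm : ‖E (-((i:ℝ) * s)) - 1‖ ≤ 3 * ((k:ℝ) * |s| * ‖H_Z‖) := by
          calc ‖E (-((i:ℝ) * s)) - 1‖
              ≤ |(-((i:ℝ) * s))| * ‖H_Z‖ * Real.exp (|(-((i:ℝ) * s))| * ‖H_Z‖) :=
                Efun_sub_one_le H_Z (-((i:ℝ) * s))
            _ = |((i:ℝ) * s)| * ‖H_Z‖ * Real.exp (|((i:ℝ) * s)| * ‖H_Z‖) := by rw [abs_neg]
            _ ≤ ((k:ℝ) * |s| * ‖H_Z‖) * 3 := mul_le_mul hisH hexp3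
                (Real.exp_pos _).le (by positivity)
            _ = 3 * ((k:ℝ) * |s| * ‖H_Z‖) := mul_comm _ _
        have hidc : E (-((i:ℝ) * s)) * Δ * E ((i:ℝ) * s) - Δ
            = (E (-((i:ℝ) * s)) - 1) * (Δ * E ((i:ℝ) * s)) + Δ * (E ((i:ℝ) * s) - 1) := by
          noncomm_ring
        rw [hidc]
        have hEn : ‖E ((i:ℝ) * s)‖ ≤ 1 := Efun_norm_le H_Z hHsa _
        calc ‖(E (-((i:ℝ) * s)) - 1) * (Δ * E ((i:ℝ) * s)) + Δ * (E ((i:ℝ) * s) - 1)‖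
            ≤ ‖(E (-((i:ℝ) * s)) - 1) * (Δ * E ((i:ℝ) * s))‖ + ‖Δ * (E ((i:ℝ) * s) - 1)‖ :=
              norm_add_le _ _
          _ ≤ ‖E (-((i:ℝ) * s)) - 1‖ * (‖Δ‖ * ‖E ((i:ℝ) * s)‖) + ‖Δ‖ * ‖E ((i:ℝ) * s) - 1‖ := by
              gcongr
              · exact le_trans (norm_mul_le _ _)
                  (mul_le_mul_of_nonneg_left (norm_mul_le _ _) (norm_nonneg _))
              · exact norm_mul_le _ _
          _ ≤ 6 * ((k:ℝ) * |s| * ‖H_Z‖) * ‖Δ‖ := by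
              have hDE : ‖Δ‖ * ‖E ((i:ℝ) * s)‖ ≤ ‖Δ‖ := by
                nlinarith [norm_nonneg Δ, norm_nonneg (E ((i:ℝ) * s))]
              have c1 : ‖E (-((i:ℝ) * s)) - 1‖ * (‖Δ‖ * ‖E ((i:ℝ) * s)‖)
                  ≤ (3 * ((k:ℝ) * |s| * ‖H_Z‖)) * ‖Δ‖ :=
                mul_le_mul hEm hDE (by positivity) (by positivity)
              have c2 : ‖Δ‖ * ‖E ((i:ℝ) * s) - 1‖ ≤ ‖Δ‖ * (3 * ((k:ℝ) * |s| * ‖H_Z‖)) :=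
                mul_le_mul_of_nonneg_left hEp (norm_nonneg Δ)
              nlinarith [c1, c2]
    -- assemble the sums
    set S : H →L[ℂ] H := ∑ i ∈ range k, R ^ i * (Δ * W s ^ i) with hSdef
    set M : H →L[ℂ] H := ∑ i ∈ range k, R ^ i * (Δ * V s ^ i) with hMdef
    have hM1 : ‖M‖ ≤ η := by
      rw [← hiden]
      calc ‖R ^ (k-1) * (V s ^ k - W s ^ k)‖
          ≤ ‖R ^ (k-1)‖ * ‖V s ^ k - W s ^ k‖ := norm_mul_le _ _
        _ ≤ 1 * η := mul_le_mul (hRpow (k-1)) (hyp k hkN₀ le_rfl) (norm_nonneg _) zero_le_one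
        _ = η := one_mul η
    have hSM : ‖S - M‖ ≤ (k:ℝ) * (η * ‖Δ‖) + (N₀:ℝ) * ((N₀:ℝ) * ‖Δ‖ * ‖Δ‖) := by
      have hdiff : S - M = ∑ i ∈ range k, R ^ i * (Δ * (W s ^ i - V s ^ i)) := by
        rw [hSdef, hMdef, ← Finset.sum_sub_distrib]
        apply Finset.sum_congr rfl
        intro i _
        rw [← mul_sub, ← mul_sub]
      have hterm : ∀ i ∈ range k,
          ‖R ^ i * (Δ * (W s ^ i - V s ^ i))‖ ≤ ‖Δ‖ * ‖V s ^ i - W s ^ i‖ := by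
        intro i _
        calc ‖R ^ i * (Δ * (W s ^ i - V s ^ i))‖
            ≤ ‖R ^ i‖ * (‖Δ‖ * ‖W s ^ i - V s ^ i‖) := le_trans (norm_mul_le _ _)
              (mul_le_mul_of_nonneg_left (norm_mul_le _ _) (norm_nonneg _))
          _ ≤ 1 * (‖Δ‖ * ‖W s ^ i - V s ^ i‖) := mul_le_mul_of_nonneg_right (hRpow i)
              (by positivity)
          _ = ‖Δ‖ * ‖V s ^ i - W s ^ i‖ := by rw [one_mul, norm_sub_rev (W s ^ i) (V s ^ i)]
      rw [hdiff]
      calc ‖∑ i ∈ range k, R ^ i * (Δ * (W s ^ i - V s ^ i))‖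
          ≤ ∑ i ∈ range k, ‖R ^ i * (Δ * (W s ^ i - V s ^ i))‖ := norm_sum_le _ _
        _ ≤ ∑ i ∈ range k, ‖Δ‖ * ‖V s ^ i - W s ^ i‖ := Finset.sum_le_sum hterm
        _ = (∑ i ∈ Finset.Ico 0 N₀, ‖Δ‖ * ‖V s ^ i - W s ^ i‖)
            + ∑ i ∈ Finset.Ico N₀ k, ‖Δ‖ * ‖V s ^ i - W s ^ i‖ := by
            rw [Finset.range_eq_Ico, ← Finset.sum_Ico_consecutive _ (Nat.zero_le N₀) hkN₀]
        _ ≤ (N₀:ℝ) * (‖Δ‖ * ((N₀:ℝ) * ‖Δ‖)) + (k:ℝ) * (‖Δ‖ * η) := by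
            have hbd1 : ∀ i ∈ Finset.Ico 0 N₀,
                ‖Δ‖ * ‖V s ^ i - W s ^ i‖ ≤ ‖Δ‖ * ((N₀:ℝ) * ‖Δ‖) := by
              intro i hi
              have hiN : i < N₀ := (Finset.mem_Ico.mp hi).2
              have h1 : ‖V s ^ i - W s ^ i‖ ≤ (i:ℝ) * ‖Δ‖ :=
                pow_sub_pow_norm_le (hVnorm s) (hWnorm s) hone i
              have h2 : (i:ℝ) * ‖Δ‖ ≤ (N₀:ℝ) * ‖Δ‖ :=
                mul_le_mul_of_nonneg_right (by exact_mod_cast hiN.le) (norm_nonneg Δ)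
              exact mul_le_mul_of_nonneg_left (le_trans h1 h2) (norm_nonneg Δ)
            have hbd2 : ∀ i ∈ Finset.Ico N₀ k,
                ‖Δ‖ * ‖V s ^ i - W s ^ i‖ ≤ ‖Δ‖ * η := by
              intro i hi
              obtain ⟨h1, h2⟩ := Finset.mem_Ico.mp hi
              exact mul_le_mul_of_nonneg_left (hyp i h1 h2.le) (norm_nonneg Δ)
            have s1 := Finset.sum_le_card_nsmul _ _ _ hbd1
            have s2 := Finset.sum_le_card_nsmul _ _ _ hbd2
            rw [Nat.card_Ico, Nat.sub_zero, nsmul_eq_mul] at s1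
            rw [Nat.card_Ico, nsmul_eq_mul] at s2
            have hcast : ((k - N₀ : ℕ) : ℝ) ≤ (k:ℝ) := by
              have : k - N₀ ≤ k := Nat.sub_le _ _
              exact_mod_cast this
            have hnn : (0:ℝ) ≤ ‖Δ‖ * η := by positivity
            nlinarith [mul_le_mul_of_nonneg_right hcast hnn]
        _ = (k:ℝ) * (η * ‖Δ‖) + (N₀:ℝ) * ((N₀:ℝ) * ‖Δ‖ * ‖Δ‖) := by ring
    have hSΔ : ‖S - (k:ℝ) • Δ‖ ≤ 6 * ((k:ℝ) * ((k:ℝ) * |s| * ‖H_Z‖)) * ‖Δ‖ := by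
      have h1 : S - (k:ℝ) • Δ = ∑ i ∈ range k, (R ^ i * (Δ * W s ^ i) - Δ) := by
        rw [Finset.sum_sub_distrib, hSdef]
        congr 1
        rw [Finset.sum_const, Finset.card_range, ← Nat.cast_smul_eq_nsmul ℝ]
      rw [h1]
      calc ‖∑ i ∈ range k, (R ^ i * (Δ * W s ^ i) - Δ)‖
          ≤ ∑ i ∈ range k, ‖R ^ i * (Δ * W s ^ i) - Δ‖ := norm_sum_le _ _
        _ ≤ ∑ _i ∈ range k, 6 * ((k:ℝ) * |s| * ‖H_Z‖) * ‖Δ‖ := Finset.sum_le_sum hterm_bound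
        _ = (k:ℝ) * (6 * ((k:ℝ) * |s| * ‖H_Z‖) * ‖Δ‖) := by
            rw [Finset.sum_const, Finset.card_range, nsmul_eq_mul]
        _ = 6 * ((k:ℝ) * ((k:ℝ) * |s| * ‖H_Z‖)) * ‖Δ‖ := by ring
    have hnormk : ‖(k:ℝ) • Δ‖ = (k:ℝ) * ‖Δ‖ := by
      rw [norm_smul, Real.norm_eq_abs, abs_of_nonneg hkpos.le]
    have hmain : (k:ℝ) * ‖Δ‖ ≤ η + ((k:ℝ) * (η * ‖Δ‖) + (N₀:ℝ) * ((N₀:ℝ) * ‖Δ‖ * ‖Δ‖))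
        + 6 * ((k:ℝ) * ((k:ℝ) * |s| * ‖H_Z‖)) * ‖Δ‖ := by
      have e1 : (k:ℝ) * ‖Δ‖ ≤ ‖S‖ + ‖S - (k:ℝ) • Δ‖ := by
        calc (k:ℝ) * ‖Δ‖ = ‖(k:ℝ) • Δ‖ := hnormk.symm
          _ = ‖S - (S - (k:ℝ) • Δ)‖ := by rw [sub_sub_cancel]
          _ ≤ ‖S‖ + ‖S - (k:ℝ) • Δ‖ := norm_sub_le _ _
      have e2 : ‖S‖ ≤ ‖M‖ + ‖S - M‖ := by
        calc ‖S‖ = ‖M + (S - M)‖ := by rw [show M + (S - M) = S by abel]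
          _ ≤ ‖M‖ + ‖S - M‖ := norm_add_le _ _
      linarith [hM1, hSM, hSΔ]
    have hquarter : (k:ℝ) * ‖Δ‖ ≤ 4 * η := by
      have hkd : (0:ℝ) ≤ (k:ℝ) * ‖Δ‖ := mul_nonneg hkpos.le (norm_nonneg Δ)
      have t1 : (k:ℝ) * (η * ‖Δ‖) ≤ (1/4) * ((k:ℝ) * ‖Δ‖) := by
        nlinarith [mul_le_mul_of_nonneg_right hη14 hkd]
      have t2 : (N₀:ℝ) * ((N₀:ℝ) * ‖Δ‖ * ‖Δ‖) ≤ (1/8) * ((k:ℝ) * ‖Δ‖) := by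
        have hc : (16:ℝ) * (N₀:ℝ) * (N₀:ℝ) ≤ (k:ℝ) := by exact_mod_cast hk16
        have hn0 : (0:ℝ) ≤ (N₀:ℝ) := Nat.cast_nonneg _
        nlinarith [norm_nonneg Δ, hΔ2, mul_nonneg (mul_nonneg hn0 hn0) (norm_nonneg Δ),
          mul_le_mul_of_nonneg_right hc (norm_nonneg Δ)]
      have t3 : 6 * ((k:ℝ) * ((k:ℝ) * |s| * ‖H_Z‖)) * ‖Δ‖ ≤ (3/8) * ((k:ℝ) * ‖Δ‖) := by
        nlinarith [mul_le_mul_of_nonneg_right hksH hkd]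
      linarith [hmain]
    -- conclude : ‖Δ‖ is o(s)-small
    have hΔs : ‖Δ‖ ≤ 128 * (‖H_Z‖ + 1) * η * |s| := by
      have h1 : 1 / (k:ℝ) ≤ 32 * |s| * (‖H_Z‖ + 1) := by
        rw [div_le_iff₀ hkpos]
        rw [div_le_iff₀ (by positivity)] at hklow
        nlinarith
      have h2 : ‖Δ‖ ≤ 4 * η / k := by
        rw [le_div_iff₀ hkpos]
        linarith [hquarter]
      calc ‖Δ‖ ≤ 4 * η / (k:ℝ) := h2
        _ = 4 * η * (1 / (k:ℝ)) := by ring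
        _ ≤ 4 * η * (32 * |s| * (‖H_Z‖ + 1)) :=
            mul_le_mul_of_nonneg_left h1 (by positivity)
        _ = 128 * (‖H_Z‖ + 1) * η * |s| := by ring
    -- final estimate
    have hsplit : s⁻¹ • (V s - P) + Complex.I • H_Z
        = s⁻¹ • Δ + (s⁻¹ • (W s - P) + Complex.I • H_Z) := by
      rw [hΔdef, show V s - P = (V s - W s) + (W s - P) by abel, smul_add]
      abel
    rw [hsplit]
    have hb1 : ‖s⁻¹ • Δ‖ ≤ 128 * (‖H_Z‖ + 1) * η := by
      rw [norm_smul, Real.norm_eq_abs, abs_inv]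
      calc |s|⁻¹ * ‖Δ‖ ≤ |s|⁻¹ * (128 * (‖H_Z‖ + 1) * η * |s|) :=
          mul_le_mul_of_nonneg_left hΔs (by positivity)
        _ = 128 * (‖H_Z‖ + 1) * η := by field_simp
    have hb1' : 128 * (‖H_Z‖ + 1) * η ≤ ε / 2 := by
      calc 128 * (‖H_Z‖ + 1) * η ≤ 128 * (‖H_Z‖ + 1) * (ε / (256 * (‖H_Z‖ + 1))) :=
          mul_le_mul_of_nonneg_left hηε (by positivity)
        _ = ε / 2 := by
            field_simp
            ring
    have hsH1 : |s| * ‖H_Z‖ ≤ 1 := by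
      have hδ3 : |s| < 1 / (‖H_Z‖ + 1) :=
        lt_of_lt_of_le hd (le_trans (min_le_right _ _) (min_le_right _ _))
      rw [lt_div_iff₀ (by positivity)] at hδ3
      nlinarith [norm_nonneg H_Z, habs.le]
    have hb2 : ‖s⁻¹ • (W s - P) + Complex.I • H_Z‖ ≤ |s| * ‖H_Z‖ ^ 2 * 3 := by
      have h0 := hWsmall s hsne
      have hexp3 : Real.exp (|s| * ‖H_Z‖) ≤ 3 := by
        calc Real.exp (|s| * ‖H_Z‖) ≤ Real.exp 1 := Real.exp_le_exp.mpr hsH1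
          _ ≤ 3 := le_of_lt (lt_trans Real.exp_one_lt_d9 (by norm_num))
      calc ‖s⁻¹ • (W s - P) + Complex.I • H_Z‖
          ≤ |s| * ‖H_Z‖ ^ 2 * Real.exp (|s| * ‖H_Z‖) := h0
        _ ≤ |s| * ‖H_Z‖ ^ 2 * 3 := by
            apply mul_le_mul_of_nonneg_left hexp3 (by positivity)
    have hb2' : |s| * ‖H_Z‖ ^ 2 * 3 < ε / 2 := by
      have hδ2 : |s| < ε / (6 * (‖H_Z‖ ^ 2 + 1)) :=
        lt_of_lt_of_le hd (le_trans (min_le_right _ _) (min_le_left _ _))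
      rw [lt_div_iff₀ (by positivity)] at hδ2
      nlinarith [sq_nonneg ‖H_Z‖, hε, habs]
    calc ‖s⁻¹ • Δ + (s⁻¹ • (W s - P) + Complex.I • H_Z)‖
        ≤ ‖s⁻¹ • Δ‖ + ‖s⁻¹ • (W s - P) + Complex.I • H_Z‖ := norm_add_le _ _
      _ < ε := by linarith
end
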